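/- arXiv:1607.04407 — 7 statements merged into one kernel-verified Lean document; each statement's English description precedes it below -/
import Mathlib

section
/- Theorem 2(1) (existence of the NAS adjusted REML estimator). Fix a real number z and y ∈ ℝ^m. If m > p + (1+z²)/2, then the function f(A) = A^{(1+z²)/4} · L_RE(A), defined for A ∈ (0,∞), attains its supremum on (0,∞): there exists Â > 0 such that f(A) ≤ f(Â) for all A > 0. -/
open Matrix Real Filter

/-- The diagonal covariance matrix `V(A) = diag(A + D₁, …, A + D_m)`. -/
noncomputable def Vmat {m : ℕ} (D : Fin m → ℝ) (A : ℝ) : Matrix (Fin m) (Fin m) ℝ :=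
  Matrix.diagonal (fun i => A + D i)

/-- The residual projection matrix `P(A) = V⁻¹ − V⁻¹X(XᵀV⁻¹X)⁻¹XᵀV⁻¹`. -/
noncomputable def Pmat {m p : ℕ} (X : Matrix (Fin m) (Fin p) ℝ) (D : Fin m → ℝ) (A : ℝ) :
    Matrix (Fin m) (Fin m) ℝ :=
  (Vmat D A)⁻¹ - (Vmat D A)⁻¹ * X * (Xᵀ * (Vmat D A)⁻¹ * X)⁻¹ * Xᵀ * (Vmat D A)⁻¹

/-- The residual likelihood
`L_RE(A) = det(XᵀV⁻¹X)^{−1/2} · det(V)^{−1/2} · exp(−yᵀP y/2)`. -/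
noncomputable def LRE {m p : ℕ} (X : Matrix (Fin m) (Fin p) ℝ) (D : Fin m → ℝ)
    (y : Fin m → ℝ) (A : ℝ) : ℝ :=
  (Xᵀ * (Vmat D A)⁻¹ * X).det ^ (-(1 : ℝ) / 2) * (Vmat D A).det ^ (-(1 : ℝ) / 2) *
    Real.exp (-(y ⬝ᵥ (Pmat X D A *ᵥ y)) / 2)

/-! ### Auxiliary definitions and lemmas -/

/-- `Wp D A = diag (A/(A+Dᵢ))`, a rescaled version of `V(A)⁻¹` that tends to `1`. -/
noncomputable def Wp {m : ℕ} (D : Fin m → ℝ) (A : ℝ) : Matrix (Fin m) (Fin m) ℝ :=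
  Matrix.diagonal (fun i => A * (A + D i)⁻¹)

/-- `Gmat = A • Pmat`, a rescaled version of `Pmat` having a finite limit at `∞`. -/
noncomputable def Gmat {m p : ℕ} (X : Matrix (Fin m) (Fin p) ℝ) (D : Fin m → ℝ) (A : ℝ) :
    Matrix (Fin m) (Fin m) ℝ :=
  Wp D A - Wp D A * X * (Xᵀ * Wp D A * X)⁻¹ * Xᵀ * Wp D A

/-- The part of `A^α · LRE` remaining after stripping off the power `A^(α+p/2-m/2)`. -/
noncomputable def gfun {m p : ℕ} (X : Matrix (Fin m) (Fin p) ℝ) (D : Fin m → ℝ)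
    (y : Fin m → ℝ) (A : ℝ) : ℝ :=
  (Xᵀ * Wp D A * X).det ^ (-(1 : ℝ) / 2) * (∏ i, (1 + D i * A⁻¹)) ^ (-(1 : ℝ) / 2) *
    Real.exp (-(y ⬝ᵥ (Pmat X D A *ᵥ y)) / 2)

lemma Vmat_det {m : ℕ} (D : Fin m → ℝ) (A : ℝ) :
    (Vmat D A).det = ∏ i, (A + D i) := by simp [Vmat]

lemma Vmat_det_pos {m : ℕ} {D : Fin m → ℝ} {A : ℝ} (hA : ∀ i, 0 < A + D i) :
    0 < (Vmat D A).det := by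
  rw [Vmat_det]; exact Finset.prod_pos fun i _ => hA i

lemma Vmat_inv {m : ℕ} {D : Fin m → ℝ} {A : ℝ} (hA : ∀ i, 0 < A + D i) :
    (Vmat D A)⁻¹ = Matrix.diagonal (fun i => (A + D i)⁻¹) := by
  apply Matrix.inv_eq_right_inv
  simp [Vmat, Matrix.diagonal_mul_diagonal]
  rw [show (fun i => (A + D i) * (A + D i)⁻¹) = fun _ => 1 from
    funext fun i => mul_inv_cancel₀ (hA i).ne']
  rfl

lemma mulVec_inj {m p : ℕ} (X : Matrix (Fin m) (Fin p) ℝ) (hrank : X.rank = p) :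
    Function.Injective X.mulVec := by
  have h := X.mulVecLin.finrank_range_add_finrank_ker
  rw [Matrix.rank] at hrank
  rw [hrank, Module.finrank_fintype_fun_eq_card, Fintype.card_fin] at h
  have hker : LinearMap.ker X.mulVecLin = ⊥ := by
    rw [← Submodule.finrank_eq_zero (R := ℝ)]
    omega
  have := LinearMap.ker_eq_bot.mp hker
  simpa [Matrix.coe_mulVecLin] using this

lemma posdef_conj {m p : ℕ} (X : Matrix (Fin m) (Fin p) ℝ) (hX : Function.Injective X.mulVec)
    {W : Matrix (Fin m) (Fin m) ℝ} (hW : W.PosDef) : (Xᵀ * W * X).PosDef := by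
  constructor
  · show (Xᵀ * W * X)ᴴ = Xᵀ * W * X
    have h1 : Wᵀ = W := by
      rw [← Matrix.conjTranspose_eq_transpose_of_trivial]; exact hW.isHermitian
    simp [Matrix.conjTranspose_mul, Matrix.conjTranspose_eq_transpose_of_trivial,
      Matrix.mul_assoc, h1]
  · intro x hx
    have h3 := hW.conjTranspose_mul_mul_same hX
    rw [Matrix.conjTranspose_eq_transpose_of_trivial] at h3
    exact h3.2 hx

section Aux

variable {m p : ℕ} {X : Matrix (Fin m) (Fin p) ℝ} {D : Fin m → ℝ} {y : Fin m → ℝ} {A : ℝ}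

lemma hApos (hA : 0 < A) (hD : ∀ i, 0 < D i) : ∀ i, 0 < A + D i :=
  fun i => add_pos hA (hD i)

lemma Mmat_posdef (hX : Function.Injective X.mulVec) (hA : ∀ i, 0 < A + D i) :
    (Xᵀ * (Vmat D A)⁻¹ * X).PosDef := by
  rw [Vmat_inv hA]
  exact posdef_conj X hX (Matrix.PosDef.diagonal fun i => inv_pos.mpr (hA i))

lemma Wp_eq_smul (hA : 0 < A) (hD : ∀ i, 0 < D i) :
    (Vmat D A)⁻¹ = A⁻¹ • Wp D A := by
  rw [Vmat_inv (hApos hA hD), Wp]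
  ext i j
  by_cases h : i = j <;> simp [Matrix.diagonal, h, Matrix.smul_apply]
  field_simp

lemma Wp_posdef (hA : 0 < A) (hD : ∀ i, 0 < D i) : (Wp D A).PosDef :=
  Matrix.PosDef.diagonal fun i => mul_pos hA (inv_pos.mpr (hApos hA hD i))

lemma Mp_posdef (hX : Function.Injective X.mulVec) (hA : 0 < A) (hD : ∀ i, 0 < D i) :
    (Xᵀ * Wp D A * X).PosDef := posdef_conj X hX (Wp_posdef hA hD)

lemma Minv_eq (hX : Function.Injective X.mulVec) (hA : 0 < A) (hD : ∀ i, 0 < D i) :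
    (Xᵀ * (Vmat D A)⁻¹ * X)⁻¹ = A • (Xᵀ * Wp D A * X)⁻¹ := by
  rw [Wp_eq_smul hA hD, Matrix.mul_smul, Matrix.smul_mul]
  apply Matrix.inv_eq_right_inv
  rw [Matrix.smul_mul, Matrix.mul_smul, smul_smul,
    Matrix.mul_nonsing_inv _ (Mp_posdef hX hA hD).det_pos.ne'.isUnit, inv_mul_cancel₀ hA.ne',
    one_smul]

lemma Pmat_eq (hX : Function.Injective X.mulVec) (hA : 0 < A) (hD : ∀ i, 0 < D i) :
    Pmat X D A = A⁻¹ • Gmat X D A := by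
  rw [Pmat, Gmat, Minv_eq hX hA hD, Wp_eq_smul hA hD]
  rw [smul_sub]
  congr 1
  simp only [Matrix.smul_mul, Matrix.mul_smul, smul_smul]
  congr 1
  field_simp

lemma detV_eq (hA : 0 < A) (hD : ∀ i, 0 < D i) :
    (Vmat D A).det = A ^ m * ∏ i, (1 + D i * A⁻¹) := by
  rw [Vmat, Matrix.det_diagonal, ← Fin.prod_const m A, ← Finset.prod_mul_distrib]
  refine Finset.prod_congr rfl fun i _ => ?_
  field_simp

lemma detM_eq (hX : Function.Injective X.mulVec) (hA : 0 < A) (hD : ∀ i, 0 < D i) :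
    (Xᵀ * (Vmat D A)⁻¹ * X).det = (A⁻¹) ^ p * (Xᵀ * Wp D A * X).det := by
  rw [Wp_eq_smul hA hD, Matrix.mul_smul, Matrix.smul_mul, Matrix.det_smul, Fintype.card_fin]

lemma contAt_LRE (hX : Function.Injective X.mulVec) (y : Fin m → ℝ) {A₀ : ℝ}
    (hA : ∀ i, 0 < A₀ + D i) :
    ContinuousAt (fun A => LRE X D y A) A₀ := by
  have cV : Continuous (fun A : ℝ => Vmat D A) :=
    Continuous.matrix_diagonal (continuous_pi fun i => continuous_id.add continuous_const)
  have hdetV : (Vmat D A₀).det ≠ 0 := (Vmat_det_pos hA).ne'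
  have cVinv : ContinuousAt (fun A => (Vmat D A)⁻¹) A₀ :=
    (continuousAt_matrix_inv _ (NormedRing.inverse_continuousAt (Units.mk0 _ hdetV))).comp
      cV.continuousAt
  have cM : ContinuousAt (fun A => Xᵀ * (Vmat D A)⁻¹ * X) A₀ := by
    have h : Continuous (fun M : Matrix (Fin m) (Fin m) ℝ => Xᵀ * M * X) :=
      (continuous_const.matrix_mul continuous_id).matrix_mul continuous_const
    exact h.continuousAt.comp cVinv
  have hdetM : (Xᵀ * (Vmat D A₀)⁻¹ * X).det ≠ 0 := (Mmat_posdef hX hA).det_pos.ne'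
  have cMinv : ContinuousAt (fun A => (Xᵀ * (Vmat D A)⁻¹ * X)⁻¹) A₀ := by
    have h := ContinuousAt.comp (x := A₀) (g := Inv.inv)
      (f := fun A => Xᵀ * (Vmat D A)⁻¹ * X)
      (continuousAt_matrix_inv _ (NormedRing.inverse_continuousAt (Units.mk0 _ hdetM))) cM
    exact h
  have cP : ContinuousAt (fun A => Pmat X D A) A₀ := by
    have h : Continuous (fun q : Matrix (Fin m) (Fin m) ℝ × Matrix (Fin p) (Fin p) ℝ =>
        q.1 - q.1 * X * q.2 * Xᵀ * q.1) := by
      exact continuous_fst.sub ((((continuous_fst.matrix_mul continuous_const).matrix_mul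
        continuous_snd).matrix_mul continuous_const).matrix_mul continuous_fst)
    exact h.continuousAt.comp (cVinv.prodMk cMinv)
  have cq : ContinuousAt (fun A => y ⬝ᵥ (Pmat X D A *ᵥ y)) A₀ := by
    have h : Continuous (fun P : Matrix (Fin m) (Fin m) ℝ => y ⬝ᵥ (P *ᵥ y)) :=
      continuous_const.dotProduct (continuous_id.matrix_mulVec continuous_const)
    exact h.continuousAt.comp cP
  have cdetM : ContinuousAt (fun A => (Xᵀ * (Vmat D A)⁻¹ * X).det) A₀ := by
    have h := ContinuousAt.comp (x := A₀) (g := Matrix.det)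
      (f := fun A => Xᵀ * (Vmat D A)⁻¹ * X)
      (continuous_id.matrix_det).continuousAt cM
    exact h
  have cdetV : ContinuousAt (fun A => (Vmat D A).det) A₀ := by
    have h := ContinuousAt.comp (x := A₀) (g := Matrix.det)
      (f := fun A => Vmat D A) (continuous_id.matrix_det).continuousAt cV.continuousAt
    exact h
  have c1 : ContinuousAt (fun A => (Xᵀ * (Vmat D A)⁻¹ * X).det ^ (-(1:ℝ)/2)) A₀ := by
    have h := ContinuousAt.comp (x := A₀) (g := fun x : ℝ => x ^ (-(1:ℝ)/2))
      (f := fun A => (Xᵀ * (Vmat D A)⁻¹ * X).det)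
      (Real.continuousAt_rpow_const _ _ (Or.inl hdetM)) cdetM
    exact h
  have c2 : ContinuousAt (fun A => (Vmat D A).det ^ (-(1:ℝ)/2)) A₀ := by
    have h := ContinuousAt.comp (x := A₀) (g := fun x : ℝ => x ^ (-(1:ℝ)/2))
      (f := fun A => (Vmat D A).det)
      (Real.continuousAt_rpow_const _ _ (Or.inl hdetV)) cdetV
    exact h
  have c3 : ContinuousAt (fun A => Real.exp (-(y ⬝ᵥ (Pmat X D A *ᵥ y)) / 2)) A₀ :=
    Real.continuous_exp.continuousAt.comp ((cq.neg).div_const 2)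
  exact (c1.mul c2).mul c3

lemma f_eq (hX : Function.Injective X.mulVec) (hD : ∀ i, 0 < D i) (α : ℝ)
    (hA : 0 < A) :
    A ^ α * LRE X D y A = A ^ (α + (p : ℝ) / 2 - (m : ℝ) / 2) * gfun X D y A := by
  have hprodpos : (0:ℝ) < ∏ i, (1 + D i * A⁻¹) :=
    Finset.prod_pos fun i _ => by have := hD i; positivity
  rw [LRE, gfun, detM_eq hX hA hD, detV_eq hA hD,
    Real.mul_rpow (by positivity) (Mp_posdef hX hA hD).det_pos.le,
    Real.mul_rpow (by positivity) hprodpos.le,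
    ← Real.rpow_natCast A⁻¹ p, ← Real.rpow_natCast A m,
    Real.inv_rpow hA.le, ← Real.rpow_neg hA.le,
    ← Real.rpow_mul hA.le, ← Real.rpow_mul hA.le]
  rw [show α + (p : ℝ) / 2 - (m : ℝ) / 2
      = α + (-(p:ℝ)) * (-(1:ℝ)/2) + (m:ℝ) * (-(1:ℝ)/2) by ring,
    Real.rpow_add hA, Real.rpow_add hA]
  ring

lemma tendsto_Wp (hD : ∀ i, 0 < D i) :
    Tendsto (fun A => Wp D (m := m) A) atTop (nhds 1) := by
  have h1 : ∀ i, Tendsto (fun A : ℝ => A * (A + D i)⁻¹) atTop (nhds 1) := by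
    intro i
    have h2 : Tendsto (fun A : ℝ => A + D i) atTop atTop :=
      tendsto_atTop_add_const_right _ _ tendsto_id
    have h3 : Tendsto (fun A : ℝ => (A + D i)⁻¹) atTop (nhds 0) := h2.inv_tendsto_atTop
    have h4 : Tendsto (fun A : ℝ => 1 - D i * (A + D i)⁻¹) atTop (nhds 1) := by
      simpa using tendsto_const_nhds.sub (h3.const_mul (D i))
    refine h4.congr' ?_
    filter_upwards [eventually_gt_atTop 0] with A hA
    have hne : A + D i ≠ 0 := (add_pos hA (hD i)).ne'
    field_simp
    ring
  have h5 : Tendsto (fun A : ℝ => (fun i => A * (A + D i)⁻¹)) atTop (nhds fun _ => 1) :=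
    tendsto_pi_nhds.mpr h1
  have hdc : Continuous (fun v : Fin m → ℝ => Matrix.diagonal v) :=
    Continuous.matrix_diagonal continuous_id
  have h6 := (hdc.tendsto (fun _ => (1:ℝ))).comp h5
  simpa [Wp, Function.comp_def, Matrix.diagonal_one] using h6

lemma tendsto_Mp (hD : ∀ i, 0 < D i) :
    Tendsto (fun A => Xᵀ * Wp D A * X) atTop (nhds (Xᵀ * X)) := by
  have h : Continuous (fun M : Matrix (Fin m) (Fin m) ℝ => Xᵀ * M * X) :=
    (continuous_const.matrix_mul continuous_id).matrix_mul continuous_const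
  have := (h.tendsto 1).comp (tendsto_Wp hD)
  simpa [Function.comp_def, Matrix.mul_one] using this

lemma XtX_posdef (hX : Function.Injective X.mulVec) : (Xᵀ * X).PosDef := by
  have := posdef_conj X hX (Matrix.PosDef.one (n := Fin m) (R := ℝ))
  simpa [Matrix.mul_one] using this

lemma tendsto_Mpinv (hX : Function.Injective X.mulVec) (hD : ∀ i, 0 < D i) :
    Tendsto (fun A => (Xᵀ * Wp D A * X)⁻¹) atTop (nhds ((Xᵀ * X)⁻¹)) := by
  have hdet : (Xᵀ * X).det ≠ 0 := (XtX_posdef hX).det_pos.ne'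
  have hc : ContinuousAt Inv.inv (Xᵀ * X) :=
    continuousAt_matrix_inv _ (NormedRing.inverse_continuousAt (Units.mk0 _ hdet))
  exact hc.tendsto.comp (tendsto_Mp hD)

lemma tendsto_q (hX : Function.Injective X.mulVec) (hD : ∀ i, 0 < D i) (y : Fin m → ℝ) :
    Tendsto (fun A => y ⬝ᵥ (Pmat X D A *ᵥ y)) atTop (nhds 0) := by
  have hF : Continuous (fun q : Matrix (Fin m) (Fin m) ℝ × Matrix (Fin p) (Fin p) ℝ =>
      q.1 - q.1 * X * q.2 * Xᵀ * q.1) :=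
    continuous_fst.sub ((((continuous_fst.matrix_mul continuous_const).matrix_mul
      continuous_snd).matrix_mul continuous_const).matrix_mul continuous_fst)
  have hG : Tendsto (fun A => Gmat X D A) atTop
      (nhds ((1 : Matrix (Fin m) (Fin m) ℝ) - X * (Xᵀ * X)⁻¹ * Xᵀ)) := by
    have := (hF.tendsto (1, (Xᵀ * X)⁻¹)).comp ((tendsto_Wp hD).prodMk_nhds (tendsto_Mpinv hX hD))
    simpa [Gmat, Function.comp_def] using this
  have hq : Continuous (fun P : Matrix (Fin m) (Fin m) ℝ => y ⬝ᵥ (P *ᵥ y)) :=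
    continuous_const.dotProduct (continuous_id.matrix_mulVec continuous_const)
  have hGq := (hq.tendsto _).comp hG
  have h2 : Tendsto (fun A : ℝ => A⁻¹ * (y ⬝ᵥ (Gmat X D A *ᵥ y))) atTop
      (nhds (0 * (y ⬝ᵥ (((1 : Matrix (Fin m) (Fin m) ℝ) - X * (Xᵀ * X)⁻¹ * Xᵀ) *ᵥ y)))) :=
    tendsto_inv_atTop_zero.mul hGq
  rw [zero_mul] at h2
  refine h2.congr' ?_
  filter_upwards [eventually_gt_atTop 0] with A hA
  rw [Pmat_eq hX hA hD, Matrix.smul_mulVec, dotProduct_smul, smul_eq_mul]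

lemma tendsto_c2 (hD : ∀ i, 0 < D i) :
    Tendsto (fun A : ℝ => ∏ i, (1 + D i * A⁻¹)) atTop (nhds 1) := by
  have h : ∀ i ∈ Finset.univ, Tendsto (fun A : ℝ => 1 + D i * A⁻¹) atTop (nhds 1) := by
    intro i _
    simpa using tendsto_const_nhds.add (tendsto_inv_atTop_zero.const_mul (D i))
  have := tendsto_finset_prod (Finset.univ (α := Fin m)) h
  simpa using this

lemma tendsto_g (hX : Function.Injective X.mulVec) (hD : ∀ i, 0 < D i) (y : Fin m → ℝ) :
    Tendsto (gfun X D y) atTop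
      (nhds ((Xᵀ * X).det ^ (-(1:ℝ)/2) * (1:ℝ) ^ (-(1:ℝ)/2) * Real.exp (-(0:ℝ)/2))) := by
  have hdet : (Xᵀ * X).det ≠ 0 := (XtX_posdef hX).det_pos.ne'
  have hdM : Tendsto (fun A => (Xᵀ * Wp D A * X).det) atTop (nhds (Xᵀ * X).det) :=
    (continuous_id.matrix_det.tendsto _).comp (tendsto_Mp hD)
  have h1 : Tendsto (fun A => (Xᵀ * Wp D A * X).det ^ (-(1:ℝ)/2)) atTop
      (nhds ((Xᵀ * X).det ^ (-(1:ℝ)/2))) :=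
    (Real.continuousAt_rpow_const _ _ (Or.inl hdet)).tendsto.comp hdM
  have h2 : Tendsto (fun A : ℝ => (∏ i, (1 + D i * A⁻¹)) ^ (-(1:ℝ)/2)) atTop
      (nhds ((1:ℝ) ^ (-(1:ℝ)/2))) :=
    (Real.continuousAt_rpow_const _ _ (Or.inl one_ne_zero)).tendsto.comp (tendsto_c2 hD)
  have h3 : Tendsto (fun A => Real.exp (-(y ⬝ᵥ (Pmat X D A *ᵥ y)) / 2)) atTop
      (nhds (Real.exp (-(0:ℝ)/2))) :=
    (Real.continuous_exp.tendsto _).comp (((tendsto_q hX hD y).neg).div_const 2)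
  exact (h1.mul h2).mul h3

lemma tendsto_f (hX : Function.Injective X.mulVec) (hD : ∀ i, 0 < D i) (y : Fin m → ℝ)
    (α : ℝ) (hβ : α + (p : ℝ) / 2 - (m : ℝ) / 2 < 0) :
    Tendsto (fun A => A ^ α * LRE X D y A) atTop (nhds 0) := by
  have h1 : Tendsto (fun A : ℝ => A ^ (α + (p : ℝ) / 2 - (m : ℝ) / 2)) atTop (nhds 0) := by
    have := tendsto_rpow_neg_atTop (y := -(α + (p : ℝ) / 2 - (m : ℝ) / 2)) (by linarith)
    simpa using this
  have h2 := h1.mul (tendsto_g hX hD y)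
  rw [zero_mul] at h2
  refine h2.congr' ?_
  filter_upwards [eventually_gt_atTop 0] with A hA
  exact (f_eq hX hD α hA).symm

end Aux

/-- Theorem 2(1): existence of the NAS adjusted REML estimator.  If
`m > p + (1+z²)/2`, then `A ↦ A^{(1+z²)/4}·L_RE(A)` attains its supremum on `(0,∞)`. -/
theorem nas_estimator_exists {m p : ℕ} (hm : 0 < m) (hp : 0 < p)
    (X : Matrix (Fin m) (Fin p) ℝ) (hrank : X.rank = p)
    (D : Fin m → ℝ) (hD : ∀ i, 0 < D i)
    (z : ℝ) (y : Fin m → ℝ)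
    (hcond : (m : ℝ) > (p : ℝ) + (1 + z ^ 2) / 2) :
    ∃ Ahat : ℝ, 0 < Ahat ∧ ∀ A : ℝ, 0 < A →
      A ^ ((1 + z ^ 2) / 4) * LRE X D y A ≤ Ahat ^ ((1 + z ^ 2) / 4) * LRE X D y Ahat := by
  set α : ℝ := (1 + z ^ 2) / 4 with hαdef
  have hαpos : 0 < α := by positivity
  set f : ℝ → ℝ := fun A => A ^ α * LRE X D y A with hfdef
  have hX : Function.Injective X.mulVec := mulVec_inj X hrank
  have hcont : ∀ A : ℝ, 0 ≤ A → ContinuousAt f A := by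
    intro A hA
    exact (Real.continuousAt_rpow_const A α (Or.inr hαpos.le)).mul
      (contAt_LRE hX y fun i => add_pos_of_nonneg_of_pos hA (hD i))
  have hpos1 : ∀ i, (0:ℝ) < 1 + D i := fun i => add_pos one_pos (hD i)
  have hf1 : 0 < f 1 := by
    have h1 : 0 < (Xᵀ * (Vmat D 1)⁻¹ * X).det := (Mmat_posdef hX hpos1).det_pos
    have h2 : 0 < (Vmat D 1).det := Vmat_det_pos hpos1
    have : 0 < LRE X D y 1 :=
      mul_pos (mul_pos (Real.rpow_pos_of_pos h1 _) (Real.rpow_pos_of_pos h2 _))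
        (Real.exp_pos _)
    simpa [hfdef, Real.one_rpow] using this
  have hβ : α + (p : ℝ) / 2 - (m : ℝ) / 2 < 0 := by
    rw [hαdef]; linarith
  have hlim := tendsto_f hX hD y α hβ
  have hev : ∀ᶠ A in atTop, f A < f 1 := hlim.eventually_lt_const hf1
  obtain ⟨B₀, hB₀⟩ := eventually_atTop.mp hev
  set B := max B₀ 1 with hBdef
  have hB1 : (1:ℝ) ≤ B := le_max_right _ _
  have hB0 : (0:ℝ) ≤ B := le_trans zero_le_one hB1
  have hcompact : IsCompact (Set.Icc (0:ℝ) B) := isCompact_Icc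
  have hcontOn : ContinuousOn f (Set.Icc 0 B) :=
    fun A hA => (hcont A hA.1).continuousWithinAt
  obtain ⟨Ahat, hmem, hmax⟩ := hcompact.exists_isMaxOn ⟨0, by simp [hB0]⟩ hcontOn
  have h1mem : (1:ℝ) ∈ Set.Icc (0:ℝ) B := ⟨zero_le_one, hB1⟩
  have hf1le : f 1 ≤ f Ahat := hmax h1mem
  have hA0 : 0 < Ahat := by
    rcases hmem.1.lt_or_eq with h | h
    · exact h
    · exfalso
      have : f Ahat = 0 := by
        simp [hfdef, ← h, Real.zero_rpow hαpos.ne']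
      linarith
  refine ⟨Ahat, hA0, fun A hA => ?_⟩
  by_cases hAB : A ≤ B
  · exact hmax ⟨hA.le, hAB⟩
  · have hge : B₀ ≤ A := le_trans (le_max_left _ _) (not_le.mp hAB).le
    exact le_trans (hB₀ A hge).le hf1le
end

section
/- Theorem 2(2) (uniqueness in the balanced case). Suppose D_i = D > 0 for all i, fix a real number z, let M = I_m − X(XᵀX)⁻¹Xᵀ, and assume m > p + (1+z²)/2. Then there is exactly one A ∈ (0,∞) at which the derivative of the map A ↦ ((1+z²)/4)·log A + log L_RE(A) vanishes, and this A is the unique positive root of the quadratic equation −2(m − p − (1+z²)/2)·A² + 2(yᵀM y − (m − p − 1 − z²)D)·A + (1+z²)D² = 0. -/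
open Matrix Real Filter

/-- A real quadratic with negative leading coefficient and positive constant term has
exactly one positive root. -/
lemma unique_pos_root {a b d : ℝ} (ha : a < 0) (hd : 0 < d) :
    ∃! x : ℝ, 0 < x ∧ a * x ^ 2 + b * x + d = 0 := by
  have hdisc : 0 < discrim a b d := by
    unfold discrim; nlinarith [sq_nonneg b]
  set s := Real.sqrt (discrim a b d) with hsdef
  have hss : discrim a b d = s * s := (Real.mul_self_sqrt hdisc.le).symm
  have hs0 : 0 < s := Real.sqrt_pos.mpr hdisc
  have hss' : b ^ 2 - 4 * a * d = s * s := by rw [← hss]; rfl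
  have had : 0 < -4 * a * d := by nlinarith
  have hb1 : b < s := by nlinarith
  have hb2 : -s < b := by nlinarith
  have ha2 : 2 * a < 0 := by linarith
  refine ⟨(-b - s) / (2 * a), ⟨div_pos_of_neg_of_neg (by linarith) ha2, ?_⟩, ?_⟩
  · have := (quadratic_eq_zero_iff ha.ne hss ((-b - s) / (2 * a))).mpr (Or.inr rfl)
    linear_combination this
  · rintro x ⟨hx, hxq⟩
    have hq : a * (x * x) + b * x + d = 0 := by linear_combination hxq
    rcases (quadratic_eq_zero_iff ha.ne hss x).mp hq with h | h
    · exfalso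
      have : (-b + s) / (2 * a) < 0 := div_neg_of_pos_of_neg (by linarith) ha2
      rw [h] at hx; linarith
    · exact h

/-- Theorem 2(2): uniqueness of the NAS adjusted REML estimator in the balanced case.
If `D_i = D` for all `i` and `m > p + (1+z²)/2`, then the derivative of
`A ↦ ((1+z²)/4)·log A + log L_RE(A)` vanishes at exactly one `A ∈ (0,∞)`, and the
stationary points in `(0,∞)` are exactly the positive roots of the stated quadratic. -/
theorem nas_estimator_unique_balanced {m p : ℕ} (hm : 0 < m) (hp : 0 < p)
    (X : Matrix (Fin m) (Fin p) ℝ) (hrank : X.rank = p)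
    (D : Fin m → ℝ) (Dv : ℝ) (hDv : 0 < Dv) (hbal : ∀ i, D i = Dv)
    (z : ℝ) (y : Fin m → ℝ)
    (M : Matrix (Fin m) (Fin m) ℝ) (hM : M = 1 - X * (Xᵀ * X)⁻¹ * Xᵀ)
    (hcond : (m : ℝ) > (p : ℝ) + (1 + z ^ 2) / 2) :
    (∃! A : ℝ, 0 < A ∧
      deriv (fun A : ℝ => ((1 + z ^ 2) / 4) * Real.log A + Real.log (LRE X D y A)) A = 0) ∧
    ∀ A : ℝ, 0 < A →
      (deriv (fun A : ℝ => ((1 + z ^ 2) / 4) * Real.log A + Real.log (LRE X D y A)) A = 0 ↔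
        -2 * ((m : ℝ) - p - (1 + z ^ 2) / 2) * A ^ 2
          + 2 * (y ⬝ᵥ (M *ᵥ y) - ((m : ℝ) - p - 1 - z ^ 2) * Dv) * A
          + (1 + z ^ 2) * Dv ^ 2 = 0) := by
  -- positivity of det (Xᵀ X)
  have hu : IsUnit (Xᵀ * X) := by
    have hr : (Xᵀ * X).rank = p := by rw [Matrix.rank_transpose_mul_self, hrank]
    rw [← Matrix.mulVec_surjective_iff_isUnit]
    have htop : LinearMap.range (Xᵀ * X).mulVecLin = ⊤ := by
      apply Submodule.eq_top_of_finrank_eq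
      rw [Matrix.rank] at hr
      rw [hr]
      simp [Module.finrank_pi]
    have hsurj : Function.Surjective (Xᵀ * X).mulVecLin := LinearMap.range_eq_top.mp htop
    rwa [Matrix.coe_mulVecLin] at hsurj
  have hK : 0 < (Xᵀ * X).det := by
    have hps : (Xᵀ * X).PosSemidef := by
      have h := Matrix.posSemidef_conjTranspose_mul_self X
      rwa [Matrix.conjTranspose_eq_transpose_of_trivial] at h
    have hinj := Matrix.mulVec_injective_iff_isUnit.mpr hu
    have hpd : (Xᵀ * X).PosDef := by
      refine Matrix.posDef_iff_dotProduct_mulVec.mpr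
        ⟨hps.1, fun x hx => lt_of_le_of_ne (hps.dotProduct_mulVec_nonneg x) fun h => hx ?_⟩
      have h0 : (Xᵀ * X) *ᵥ x = 0 := (hps.dotProduct_mulVec_zero_iff x).mp h.symm
      exact hinj (a₁ := x) (a₂ := 0) (by simpa using h0)
    exact hpd.det_pos
  set c := y ⬝ᵥ (M *ᵥ y) with hc
  set K := (Xᵀ * X).det with hKdef
  -- log of the likelihood on (0, ∞)
  have hlog : ∀ A : ℝ, 0 < A → Real.log (LRE X D y A)
      = (-(1:ℝ)/2) * Real.log K + (((p:ℝ) - m)/2) * Real.log (A + Dv)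
        + (-c/2) * (A + Dv)⁻¹ := by
    intro A hA
    have ht : (0:ℝ) < A + Dv := by linarith
    have hVinv : (Vmat D A)⁻¹ = (A + Dv)⁻¹ • (1 : Matrix (Fin m) (Fin m) ℝ) := by
      have hV : Vmat D A = (A + Dv) • (1 : Matrix (Fin m) (Fin m) ℝ) := by
        unfold Vmat
        simp only [hbal]
        rw [Matrix.smul_one_eq_diagonal]
      rw [hV]
      apply Matrix.inv_eq_right_inv
      rw [Matrix.smul_mul, Matrix.mul_smul, one_mul, smul_smul, mul_inv_cancel₀ ht.ne', one_smul]
    have hXVX : Xᵀ * (Vmat D A)⁻¹ * X = (A + Dv)⁻¹ • (Xᵀ * X) := by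
      rw [hVinv, Matrix.mul_smul, Matrix.mul_one, Matrix.smul_mul]
    have hXVXinv : (Xᵀ * (Vmat D A)⁻¹ * X)⁻¹ = (A + Dv) • (Xᵀ * X)⁻¹ := by
      rw [hXVX]
      apply Matrix.inv_eq_right_inv
      rw [Matrix.smul_mul, Matrix.mul_smul, smul_smul, inv_mul_cancel₀ ht.ne', one_smul,
        Matrix.mul_nonsing_inv _ hK.ne'.isUnit]
    have hP : Pmat X D A = (A + Dv)⁻¹ • M := by
      unfold Pmat
      rw [hXVXinv, hVinv, hM]
      simp only [Matrix.smul_mul, Matrix.mul_smul, Matrix.one_mul, Matrix.mul_one, smul_smul,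
        smul_sub, Matrix.mul_assoc]
      congr 2
      field_simp
    have hyPy : y ⬝ᵥ (Pmat X D A *ᵥ y) = (A + Dv)⁻¹ * c := by
      rw [hP, Matrix.smul_mulVec, dotProduct_smul, smul_eq_mul]
    have hdetV : (Vmat D A).det = (A + Dv) ^ m := by
      unfold Vmat
      simp [Matrix.det_diagonal, hbal, Finset.prod_const]
    have hdetXVX : (Xᵀ * (Vmat D A)⁻¹ * X).det = ((A + Dv)⁻¹) ^ p * K := by
      rw [hXVX, Matrix.det_smul, Fintype.card_fin]
    have hti : (0:ℝ) < (A + Dv)⁻¹ := inv_pos.mpr ht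
    have hd1 : (0:ℝ) < ((A + Dv)⁻¹) ^ p * K := mul_pos (pow_pos hti p) hK
    have hd2 : (0:ℝ) < (A + Dv) ^ m := pow_pos ht m
    unfold LRE
    rw [hdetXVX, hdetV, hyPy]
    rw [Real.log_mul (by positivity) (Real.exp_ne_zero _),
      Real.log_mul (by positivity) (by positivity),
      Real.log_exp, Real.log_rpow hd1, Real.log_rpow hd2,
      Real.log_mul (by positivity) hK.ne', Real.log_pow, Real.log_inv, Real.log_pow]
    ring
  -- the derivative on (0, ∞)
  have hderiv : ∀ A : ℝ, 0 < A →
      deriv (fun A : ℝ => ((1 + z ^ 2) / 4) * Real.log A + Real.log (LRE X D y A)) A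
        = (1 + z ^ 2) / 4 * A⁻¹ + ((((p:ℝ) - m)/2) * (1 / (A + Dv))
            + (-c/2) * (-1 / (A + Dv) ^ 2)) := by
    intro A hA
    have ht : (0:ℝ) < A + Dv := by linarith
    have hEq : (fun A : ℝ => ((1 + z ^ 2) / 4) * Real.log A + Real.log (LRE X D y A))
        =ᶠ[nhds A] fun A : ℝ => ((1 + z ^ 2) / 4) * Real.log A
          + ((-(1:ℝ)/2) * Real.log K + ((((p:ℝ) - m)/2) * Real.log (A + Dv)
            + (-c/2) * (A + Dv)⁻¹)) := by
      filter_upwards [Ioi_mem_nhds hA] with B hB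
      rw [hlog B hB]
      ring
    rw [hEq.deriv_eq]
    have hid : HasDerivAt (fun B : ℝ => B + Dv) 1 A := (hasDerivAt_id A).add_const Dv
    have h1 : HasDerivAt (fun B : ℝ => ((1 + z ^ 2) / 4) * Real.log B)
        ((1 + z ^ 2) / 4 * A⁻¹) A := (Real.hasDerivAt_log hA.ne').const_mul _
    have h2 : HasDerivAt (fun B : ℝ => (((p:ℝ) - m)/2) * Real.log (B + Dv))
        ((((p:ℝ) - m)/2) * (1 / (A + Dv))) A := (hid.log ht.ne').const_mul _
    have h3 : HasDerivAt (fun B : ℝ => (-c/2) * (B + Dv)⁻¹)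
        ((-c/2) * (-1 / (A + Dv) ^ 2)) A := (hid.inv ht.ne').const_mul _
    have h4 := h1.add (((h2.add h3)).const_add ((-(1:ℝ)/2) * Real.log K))
    convert h4.deriv using 2
    funext B; rfl
  -- the quadratic coefficients
  set a : ℝ := -2 * ((m : ℝ) - p - (1 + z ^ 2) / 2) with hadef
  set b : ℝ := 2 * (c - ((m : ℝ) - p - 1 - z ^ 2) * Dv) with hbdef
  set d : ℝ := (1 + z ^ 2) * Dv ^ 2 with hddef
  have ha : a < 0 := by rw [hadef]; nlinarith [sq_nonneg z]
  have hd : 0 < d := by rw [hddef]; positivity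
  have hiff : ∀ A : ℝ, 0 < A →
      (deriv (fun A : ℝ => ((1 + z ^ 2) / 4) * Real.log A + Real.log (LRE X D y A)) A = 0 ↔
        a * A ^ 2 + b * A + d = 0) := by
    intro A hA
    have ht : (0:ℝ) < A + Dv := by linarith
    rw [hderiv A hA]
    have key : a * A ^ 2 + b * A + d
        = (4 * A * (A + Dv) ^ 2) * ((1 + z ^ 2) / 4 * A⁻¹ + ((((p:ℝ) - m)/2) * (1 / (A + Dv))
            + (-c/2) * (-1 / (A + Dv) ^ 2))) := by
      rw [hadef, hbdef, hddef]
      field_simp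
      ring
    constructor
    · intro h; rw [key, h, mul_zero]
    · intro h
      rw [key] at h
      rcases mul_eq_zero.mp h with h' | h'
      · exact absurd h' (by positivity)
      · exact h'
  constructor
  · obtain ⟨A₀, ⟨hA₀, hroot⟩, huniq⟩ := unique_pos_root ha hd
    exact ⟨A₀, ⟨hA₀, (hiff A₀ hA₀).mpr hroot⟩,
      fun A' ⟨hA', hder⟩ => huniq A' ⟨hA', (hiff A' hA').mp hder⟩⟩
  · intro A hA
    exact hiff A hA
end

section
/- Theorem 3(3) (existence of the estimator Â_i^{(c)}). Fix a real number z, y ∈ ℝ^m, and an index i with 1 ≤ i ≤ m. If m > p + 4, then the function f(A) = A^{(1+z²)/4} · (A+D_i)^{(7−z²)/4} · L_RE(A), defined for A ∈ (0,∞), attains its supremum on (0,∞): there exists Â > 0 such that f(A) ≤ f(Â) for all A > 0. -/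
open Matrix Real Filter

open Matrix Real Filter

lemma quad_eq {m p : ℕ} (X : Matrix (Fin m) (Fin p) ℝ) (W : Matrix (Fin m) (Fin m) ℝ)
    (v : Fin p → ℝ) :
    v ⬝ᵥ ((Xᵀ * W * X) *ᵥ v) = (X *ᵥ v) ⬝ᵥ (W *ᵥ (X *ᵥ v)) := by
  rw [← Matrix.mulVec_mulVec, ← Matrix.mulVec_mulVec, Matrix.dotProduct_mulVec,
    Matrix.vecMul_transpose]

lemma inj_of_rank {m p : ℕ} (X : Matrix (Fin m) (Fin p) ℝ) (h : X.rank = p) :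
    ∀ v : Fin p → ℝ, X *ᵥ v = 0 → v = 0 := by
  intro v hv
  have h1 := LinearMap.finrank_range_add_finrank_ker X.mulVecLin
  have h2 : Module.finrank ℝ (LinearMap.range X.mulVecLin) = p := h
  rw [h2] at h1
  simp only [Module.finrank_pi, Fintype.card_fin] at h1
  have h3 : Module.finrank ℝ (LinearMap.ker X.mulVecLin) = 0 := by omega
  have h4 : LinearMap.ker X.mulVecLin = ⊥ := Submodule.finrank_eq_zero.mp h3
  have h5 : v ∈ LinearMap.ker X.mulVecLin := by
    simp [LinearMap.mem_ker, Matrix.mulVecLin_apply, hv]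
  rw [h4] at h5
  simpa using h5

lemma posdef_XWX {m p : ℕ} (X : Matrix (Fin m) (Fin p) ℝ)
    (hX : ∀ v : Fin p → ℝ, X *ᵥ v = 0 → v = 0) {d : Fin m → ℝ} (hd : ∀ j, 0 < d j) :
    (Xᵀ * Matrix.diagonal d * X).PosDef := by
  have hdiag : (Matrix.diagonal d).PosDef := Matrix.PosDef.diagonal hd
  refine Matrix.PosDef.of_dotProduct_mulVec_pos ?_ (fun v hv => ?_)
  · have := Matrix.isHermitian_conjTranspose_mul_mul X hdiag.1
    simpa [Matrix.conjTranspose_eq_transpose_of_trivial] using this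
  · have hs : star v = v := by funext j; simp
    rw [hs, quad_eq]
    have hXv : X *ᵥ v ≠ 0 := fun hc => hv (hX v hc)
    have := hdiag.dotProduct_mulVec_pos hXv
    simpa using this

lemma diag_cont {m : ℕ} : Continuous (fun v : Fin m → ℝ => Matrix.diagonal v) := by
  apply continuous_matrix
  intro i j
  by_cases h : i = j
  · subst h; simp only [Matrix.diagonal_apply_eq]; exact continuous_apply i
  · simp only [Matrix.diagonal_apply_ne _ h]; exact continuous_const

lemma Vinv_eq {m : ℕ} (D : Fin m → ℝ) {A : ℝ} (hA : ∀ j, 0 < A + D j) :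
    (Vmat D A)⁻¹ = Matrix.diagonal fun j => (A + D j)⁻¹ := by
  apply Matrix.inv_eq_right_inv
  rw [Vmat, Matrix.diagonal_mul_diagonal, ← Matrix.diagonal_one]
  have h1 : (fun j => (A + D j) * (A + D j)⁻¹) = fun _ => (1:ℝ) :=
    funext fun j => mul_inv_cancel₀ (hA j).ne'
  rw [h1]

lemma quad_psd {m p : ℕ} (X : Matrix (Fin m) (Fin p) ℝ)
    (hX : ∀ v : Fin p → ℝ, X *ᵥ v = 0 → v = 0)
    (D : Fin m → ℝ) {A : ℝ} (hAD : ∀ j, 0 < A + D j) (y : Fin m → ℝ) :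
    0 ≤ y ⬝ᵥ (Pmat X D A *ᵥ y) := by
  set V := Vmat D A with hV
  have hVpd : V.PosDef := Matrix.PosDef.diagonal hAD
  have hVdet : IsUnit V.det := hVpd.det_pos.ne'.isUnit
  have hVi : V⁻¹ = Matrix.diagonal fun j => (A + D j)⁻¹ := Vinv_eq D hAD
  set M := Xᵀ * V⁻¹ * X with hM
  have hMpd : M.PosDef := by
    rw [hM, hVi]; exact posdef_XWX X hX fun j => inv_pos.2 (hAD j)
  have hMdet : IsUnit M.det := hMpd.det_pos.ne'.isUnit
  set N := M⁻¹ with hN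
  have hNM : N * M = 1 := Matrix.nonsing_inv_mul _ hMdet
  have hViV : V⁻¹ * V = 1 := Matrix.nonsing_inv_mul _ hVdet
  have hVVi : V * V⁻¹ = 1 := Matrix.mul_nonsing_inv _ hVdet
  have hVisym : (V⁻¹)ᵀ = V⁻¹ := by
    rw [Matrix.transpose_nonsing_inv]
    congr 1
    rw [hV, Vmat, Matrix.diagonal_transpose]
  have hMsym : Mᵀ = M := by
    rw [hM, Matrix.transpose_mul, Matrix.transpose_mul, Matrix.transpose_transpose, hVisym,
      Matrix.mul_assoc]
  have hNsym : Nᵀ = N := by rw [hN, Matrix.transpose_nonsing_inv, hMsym]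
  set P := Pmat X D A with hP
  have hPe : P = V⁻¹ - V⁻¹ * X * N * Xᵀ * V⁻¹ := rfl
  have hPsym : Pᵀ = P := by
    rw [hPe]
    simp only [Matrix.transpose_sub, Matrix.transpose_mul, Matrix.transpose_transpose, hVisym,
      hNsym, Matrix.mul_assoc]
  have c1 : ∀ B : Matrix (Fin m) (Fin m) ℝ, V⁻¹ * (V * B) = B := fun B => by
    rw [← Matrix.mul_assoc, hViV, Matrix.one_mul]
  have c2 : ∀ B : Matrix (Fin p) (Fin m) ℝ, N * (Xᵀ * (V⁻¹ * (X * B))) = B := fun B => by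
    have h : Xᵀ * (V⁻¹ * (X * B)) = M * B := by rw [hM]; simp only [Matrix.mul_assoc]
    rw [h, ← Matrix.mul_assoc, hNM, Matrix.one_mul]
  have key : P * V * P = P := by
    rw [hPe]
    simp only [Matrix.sub_mul, Matrix.mul_sub, Matrix.mul_assoc, c1, c2, hVVi, Matrix.mul_one]
    abel
  have psd : (Pᴴ * V * P).PosSemidef := hVpd.posSemidef.conjTranspose_mul_mul_same P
  have hPVP : Pᴴ * V * P = P := by
    rw [Matrix.conjTranspose_eq_transpose_of_trivial, hPsym, key]
  rw [hPVP] at psd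
  have h := psd.dotProduct_mulVec_nonneg y
  simpa using h

lemma Vinv_scaled {m : ℕ} (D : Fin m → ℝ) (hD : ∀ j, 0 < D j) {A : ℝ} (hA : 0 < A) :
    (Vmat D A)⁻¹ =
      (A + 1)⁻¹ • Matrix.diagonal (fun j => (1 - (A + 1)⁻¹ + (A + 1)⁻¹ * D j)⁻¹) := by
  have hA1 : (0:ℝ) < A + 1 := by linarith
  rw [Vinv_eq D (fun j => add_pos hA (hD j)), ← Matrix.diagonal_smul]
  have hv : (fun j => (A + D j)⁻¹) =
      (A + 1)⁻¹ • fun j => (1 - (A + 1)⁻¹ + (A + 1)⁻¹ * D j)⁻¹ := by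
    funext j
    have hADj : A + D j ≠ 0 := (add_pos hA (hD j)).ne'
    rw [Pi.smul_apply, smul_eq_mul, ← mul_inv]
    congr 1
    field_simp
    ring
  rw [hv]

lemma detM_scaled {m p : ℕ} (X : Matrix (Fin m) (Fin p) ℝ) (D : Fin m → ℝ)
    (hD : ∀ j, 0 < D j) {A : ℝ} (hA : 0 < A) :
    (Xᵀ * (Vmat D A)⁻¹ * X).det =
      ((A + 1)⁻¹) ^ p *
        (Xᵀ * Matrix.diagonal (fun j => (1 - (A + 1)⁻¹ + (A + 1)⁻¹ * D j)⁻¹) * X).det := by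
  rw [Vinv_scaled D hD hA, Matrix.mul_smul, Matrix.smul_mul, Matrix.det_smul, Fintype.card_fin]

lemma wpos {m : ℕ} (D : Fin m → ℝ) (hD : ∀ j, 0 < D j) {t : ℝ}
    (ht : t ∈ Set.Icc (0:ℝ) 1) (j : Fin m) : 0 < 1 - t + t * D j := by
  rcases eq_or_lt_of_le ht.2 with h | h
  · subst h; have := hD j; simpa using this
  · have h1 : 0 ≤ t * D j := mul_nonneg ht.1 (hD j).le
    linarith

lemma psi_contOn {m p : ℕ} (X : Matrix (Fin m) (Fin p) ℝ) (D : Fin m → ℝ)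
    (hD : ∀ j, 0 < D j) :
    ContinuousOn (fun t => (Xᵀ * Matrix.diagonal (fun j => (1 - t + t * D j)⁻¹) * X).det)
      (Set.Icc (0:ℝ) 1) := by
  have houter : Continuous (fun W : Matrix (Fin m) (Fin m) ℝ => (Xᵀ * W * X).det) :=
    ((continuous_const.matrix_mul continuous_id).matrix_mul continuous_const).matrix_det
  apply houter.comp_continuousOn
  apply diag_cont.comp_continuousOn
  apply continuousOn_pi.2
  intro j
  apply ContinuousOn.inv₀
  · exact (by fun_prop : Continuous fun t : ℝ => 1 - t + t * D j).continuousOn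
  · exact fun t ht => (wpos D hD ht j).ne'

lemma LRE_contAt {m p : ℕ} (X : Matrix (Fin m) (Fin p) ℝ)
    (hX : ∀ v : Fin p → ℝ, X *ᵥ v = 0 → v = 0)
    (D : Fin m → ℝ) (hD : ∀ j, 0 < D j) (y : Fin m → ℝ) {A₀ : ℝ} (h : 0 < A₀) :
    ContinuousAt (LRE X D y) A₀ := by
  have hADpos : ∀ j, 0 < A₀ + D j := fun j => add_pos h (hD j)
  have hvica : ContinuousAt (fun A => (Vmat D A)⁻¹) A₀ := by
    have h1 : ContinuousAt (fun A => Matrix.diagonal (fun j => (A + D j)⁻¹)) A₀ := by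
      apply diag_cont.continuousAt.comp
      apply continuousAt_pi.2
      intro j
      exact ((continuous_id.add continuous_const).continuousAt).inv₀ (hADpos j).ne'
    apply h1.congr
    filter_upwards [isOpen_Ioi.mem_nhds (show A₀ ∈ Set.Ioi (0:ℝ) from h)] with A hA
    exact (Vinv_eq D fun j => add_pos hA (hD j)).symm
  have hmca : ContinuousAt (fun A => Xᵀ * (Vmat D A)⁻¹ * X) A₀ :=
    ((continuous_const.matrix_mul continuous_id).matrix_mul
      continuous_const).continuousAt.comp hvica
  have hdet1ca : ContinuousAt (fun A => (Xᵀ * (Vmat D A)⁻¹ * X).det) A₀ :=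
    (continuous_id.matrix_det).continuousAt.comp hmca
  have hdet1pos : 0 < (Xᵀ * (Vmat D A₀)⁻¹ * X).det := by
    rw [Vinv_eq D hADpos]
    exact (posdef_XWX X hX fun j => inv_pos.2 (hADpos j)).det_pos
  have hr1 : ContinuousAt (fun A => (Xᵀ * (Vmat D A)⁻¹ * X).det ^ (-(1:ℝ)/2)) A₀ :=
    hdet1ca.rpow_const (Or.inl hdet1pos.ne')
  have hvmc : Continuous (Vmat D) := by
    unfold Vmat
    exact diag_cont.comp (continuous_pi fun j => continuous_id.add continuous_const)
  have hdet2pos : 0 < (Vmat D A₀).det := by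
    rw [Vmat, Matrix.det_diagonal]
    exact Finset.prod_pos fun j _ => hADpos j
  have hr2 : ContinuousAt (fun A => (Vmat D A).det ^ (-(1:ℝ)/2)) A₀ :=
    (hvmc.matrix_det.continuousAt).rpow_const (Or.inl hdet2pos.ne')
  have hNca : ContinuousAt (fun A => (Xᵀ * (Vmat D A)⁻¹ * X)⁻¹) A₀ := by
    refine (continuousAt_matrix_inv _ ?_).comp hmca
    rw [Ring.inverse_eq_inv']
    exact continuousAt_inv₀ hdet1pos.ne'
  have hPca : ContinuousAt (fun A => Pmat X D A) A₀ := by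
    have hF : Continuous (fun q : Matrix (Fin m) (Fin m) ℝ × Matrix (Fin p) (Fin p) ℝ =>
        q.1 - q.1 * X * q.2 * Xᵀ * q.1) :=
      continuous_fst.sub ((((continuous_fst.matrix_mul continuous_const).matrix_mul
        continuous_snd).matrix_mul continuous_const).matrix_mul continuous_fst)
    exact hF.continuousAt.comp (hvica.prodMk hNca)
  have hqca : ContinuousAt (fun A => y ⬝ᵥ (Pmat X D A *ᵥ y)) A₀ := by
    have hG : Continuous (fun P : Matrix (Fin m) (Fin m) ℝ => y ⬝ᵥ (P *ᵥ y)) :=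
      (continuous_const).dotProduct (continuous_id.matrix_mulVec continuous_const)
    exact hG.continuousAt.comp hPca
  have hexp : ContinuousAt (fun A => Real.exp (-(y ⬝ᵥ (Pmat X D A *ᵥ y)) / 2)) A₀ :=
    Real.continuous_exp.continuousAt.comp ((hqca.neg).div_const 2)
  exact (hr1.mul hr2).mul hexp

lemma f_contAt {m p : ℕ} (X : Matrix (Fin m) (Fin p) ℝ)
    (hX : ∀ v : Fin p → ℝ, X *ᵥ v = 0 → v = 0)
    (D : Fin m → ℝ) (hD : ∀ j, 0 < D j) (y : Fin m → ℝ) (i : Fin m) (a b : ℝ)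
    {A₀ : ℝ} (h : 0 < A₀) :
    ContinuousAt (fun A => A ^ a * (A + D i) ^ b * LRE X D y A) A₀ := by
  have h1 : ContinuousAt (fun A : ℝ => A ^ a) A₀ :=
    Real.continuousAt_rpow_const _ _ (Or.inl h.ne')
  have h2 : ContinuousAt (fun A : ℝ => (A + D i) ^ b) A₀ :=
    ((continuous_id.add continuous_const).continuousAt).rpow_const
      (Or.inl (add_pos h (hD i)).ne')
  exact (h1.mul h2).mul (LRE_contAt X hX D hD y h)

set_option maxHeartbeats 1000000 in
/-- Theorem 3(3): existence of the estimator `Â_i^{(c)}`.  If `m > p + 4`, then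
`A ↦ A^{(1+z²)/4}·(A+D_i)^{(7−z²)/4}·L_RE(A)` attains its supremum on `(0,∞)`. -/
theorem c_estimator_exists {m p : ℕ} (hm : 0 < m) (hp : 0 < p)
    (X : Matrix (Fin m) (Fin p) ℝ) (hrank : X.rank = p)
    (D : Fin m → ℝ) (hD : ∀ i, 0 < D i)
    (z : ℝ) (y : Fin m → ℝ) (i : Fin m)
    (hcond : m > p + 4) :
    ∃ Ahat : ℝ, 0 < Ahat ∧ ∀ A : ℝ, 0 < A →
      A ^ ((1 + z ^ 2) / 4) * (A + D i) ^ ((7 - z ^ 2) / 4) * LRE X D y A ≤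
        Ahat ^ ((1 + z ^ 2) / 4) * (Ahat + D i) ^ ((7 - z ^ 2) / 4) * LRE X D y Ahat := by
  classical
  set a : ℝ := (1 + z ^ 2) / 4 with ha_def
  set b : ℝ := (7 - z ^ 2) / 4 with hb_def
  set f : ℝ → ℝ := fun A => A ^ a * (A + D i) ^ b * LRE X D y A with hf_def
  have ha : 0 < a := by rw [ha_def]; positivity
  have hab : a + b = 2 := by rw [ha_def, hb_def]; ring
  have hX : ∀ v : Fin p → ℝ, X *ᵥ v = 0 → v = 0 := inj_of_rank X hrank
  -- the rescaled determinant function and its minimum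
  set ψ : ℝ → ℝ :=
    fun t => (Xᵀ * Matrix.diagonal (fun j => (1 - t + t * D j)⁻¹) * X).det with hψ_def
  have hψcont : ContinuousOn ψ (Set.Icc 0 1) := psi_contOn X D hD
  have hψpos : ∀ t ∈ Set.Icc (0:ℝ) 1, 0 < ψ t := fun t ht =>
    (posdef_XWX X hX fun j => inv_pos.2 (wpos D hD ht j)).det_pos
  obtain ⟨t₀, ht₀, hmin⟩ := isCompact_Icc.exists_isMinOn
    (⟨0, by simp⟩ : (Set.Icc (0:ℝ) 1).Nonempty) hψcont
  set c : ℝ := ψ t₀ with hc_def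
  have hcpos : 0 < c := hψpos t₀ ht₀
  have hψlb : ∀ t ∈ Set.Icc (0:ℝ) 1, c ≤ ψ t := fun t ht => hmin ht
  -- determinant bounds
  have hdetM_pos : ∀ A : ℝ, 0 < A → 0 < (Xᵀ * (Vmat D A)⁻¹ * X).det := by
    intro A hA
    rw [Vinv_eq D (fun j => add_pos hA (hD j))]
    exact (posdef_XWX X hX fun j => inv_pos.2 (add_pos hA (hD j))).det_pos
  have hdetM_lb : ∀ A : ℝ, 0 < A →
      c * (A + 1) ^ (-(p:ℝ)) ≤ (Xᵀ * (Vmat D A)⁻¹ * X).det := by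
    intro A hA
    have hA1 : (0:ℝ) < A + 1 := by linarith
    have ht : (A + 1)⁻¹ ∈ Set.Icc (0:ℝ) 1 := by
      constructor
      · positivity
      · rw [inv_le_one_iff₀]; right; linarith
    rw [detM_scaled X D hD hA]
    have h1 : (A + 1) ^ (-(p:ℝ)) = ((A + 1)⁻¹) ^ p := by
      rw [Real.rpow_neg hA1.le, Real.rpow_natCast, inv_pow]
    rw [h1, mul_comm c _]
    exact mul_le_mul_of_nonneg_left (hψlb _ ht) (by positivity)
  have hdetV : ∀ A : ℝ, (Vmat D A).det = ∏ j, (A + D j) := fun A => by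
    rw [Vmat, Matrix.det_diagonal]
  have hdetV_pos : ∀ A : ℝ, 0 < A → 0 < (Vmat D A).det := by
    intro A hA; rw [hdetV]; exact Finset.prod_pos fun j _ => add_pos hA (hD j)
  have hdetV_lb0 : ∀ A : ℝ, 0 < A → (∏ j, D j) ≤ (Vmat D A).det := by
    intro A hA; rw [hdetV]
    exact Finset.prod_le_prod (fun j _ => (hD j).le) (fun j _ => by linarith)
  have hdetV_lbA : ∀ A : ℝ, 0 < A → A ^ (m:ℝ) ≤ (Vmat D A).det := by
    intro A hA; rw [hdetV, Real.rpow_natCast]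
    calc A ^ m = ∏ _j : Fin m, A := by
          rw [Finset.prod_const, Finset.card_univ, Fintype.card_fin]
      _ ≤ ∏ j, (A + D j) :=
          Finset.prod_le_prod (fun j _ => hA.le) (fun j _ => by linarith [hD j])
  have hexp_le : ∀ A : ℝ, 0 < A →
      Real.exp (-(y ⬝ᵥ (Pmat X D A *ᵥ y)) / 2) ≤ 1 := by
    intro A hA
    rw [Real.exp_le_one_iff]
    have := quad_psd X hX D (fun j => add_pos hA (hD j)) y
    linarith
  have hLRE_pos : ∀ A : ℝ, 0 < A → 0 < LRE X D y A := by
    intro A hA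
    unfold LRE
    have h1 := hdetM_pos A hA
    have h2 := hdetV_pos A hA
    positivity
  have hfpos : ∀ A : ℝ, 0 < A → 0 < f A := by
    intro A hA
    rw [hf_def]
    have h3 := hLRE_pos A hA
    have h4 : 0 < A + D i := add_pos hA (hD i)
    positivity
  -- constants
  set d₀ : ℝ := ∏ j, D j with hd₀_def
  have hd₀ : 0 < d₀ := Finset.prod_pos fun j _ => hD j
  set C₃ : ℝ := max (D i ^ b) ((1 + D i) ^ b) with hC₃_def
  have hC₃ : 0 < C₃ := lt_max_of_lt_left (Real.rpow_pos_of_pos (hD i) b)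
  set c₁ : ℝ := c * (2:ℝ) ^ (-(p:ℝ)) with hc₁_def
  have hc₁ : 0 < c₁ := by rw [hc₁_def]; positivity
  set δ : ℝ := (m:ℝ)/2 - (p:ℝ)/2 - 2 with hδ_def
  have hδ : 0 < δ := by
    have : (p:ℝ) + 5 ≤ (m:ℝ) := by exact_mod_cast hcond
    rw [hδ_def]; linarith
  set K : ℝ := 4 * (c ^ (-(1:ℝ)/2) * (2:ℝ) ^ ((p:ℝ)/2)) with hK_def
  -- bound near zero
  have hb0 : ∀ A : ℝ, 0 < A → A ≤ 1 →
      f A ≤ A ^ a * C₃ * (c₁ ^ (-(1:ℝ)/2) * d₀ ^ (-(1:ℝ)/2) * 1) := by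
    intro A hA hA1
    have hADi : 0 < A + D i := add_pos hA (hD i)
    have hd1pos := hdetM_pos A hA
    have hd2pos := hdetV_pos A hA
    have h1 : (A + D i) ^ b ≤ C₃ := by
      rcases le_or_gt 0 b with hb | hb
      · exact le_trans (Real.rpow_le_rpow hADi.le (by linarith) hb) (le_max_right _ _)
      · exact le_trans (Real.rpow_le_rpow_of_nonpos (hD i) (by linarith) hb.le)
          (le_max_left _ _)
    have h2 : (Xᵀ * (Vmat D A)⁻¹ * X).det ^ (-(1:ℝ)/2) ≤ c₁ ^ (-(1:ℝ)/2) := by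
      apply Real.rpow_le_rpow_of_nonpos hc₁ ?_ (by norm_num)
      refine le_trans ?_ (hdetM_lb A hA)
      rw [hc₁_def]
      apply mul_le_mul_of_nonneg_left ?_ hcpos.le
      exact Real.rpow_le_rpow_of_nonpos (by linarith) (by linarith)
        (neg_nonpos.2 (Nat.cast_nonneg p))
    have h3 : (Vmat D A).det ^ (-(1:ℝ)/2) ≤ d₀ ^ (-(1:ℝ)/2) :=
      Real.rpow_le_rpow_of_nonpos hd₀ (hdetV_lb0 A hA) (by norm_num)
    have h4 := hexp_le A hA
    simp only [hf_def]
    unfold LRE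
    have hnn1 : (0:ℝ) ≤ A ^ a := Real.rpow_nonneg hA.le a
    refine mul_le_mul (mul_le_mul_of_nonneg_left h1 hnn1) ?_
      (mul_nonneg (mul_nonneg (Real.rpow_nonneg hd1pos.le _)
        (Real.rpow_nonneg hd2pos.le _)) (Real.exp_pos _).le)
      (mul_nonneg hnn1 hC₃.le)
    exact mul_le_mul (mul_le_mul h2 h3 (Real.rpow_nonneg hd2pos.le _)
        (Real.rpow_nonneg hc₁.le _)) h4 (Real.exp_pos _).le
      (mul_nonneg (Real.rpow_nonneg hc₁.le _) (Real.rpow_nonneg hd₀.le _))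
  -- bound at infinity
  have hbinf : ∀ A : ℝ, max 1 (D i) ≤ A → f A ≤ K * A ^ (-δ) := by
    intro A hAge
    have hA1 : 1 ≤ A := le_trans (le_max_left _ _) hAge
    have hDiA : D i ≤ A := le_trans (le_max_right _ _) hAge
    have hA : 0 < A := lt_of_lt_of_le one_pos hA1
    have hDi0 : 0 < D i := hD i
    have hADi : 0 < A + D i := add_pos hA (hD i)
    have hd1pos := hdetM_pos A hA
    have hd2pos := hdetV_pos A hA
    have h22 : (2:ℝ) ^ (2:ℝ) = 4 := by
      have h := Real.rpow_natCast (2:ℝ) 2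
      norm_num at h
      linarith
    -- step 2 : A^a * (A+Di)^b ≤ 4 * A^2
    have step2 : A ^ a * (A + D i) ^ b ≤ 4 * A ^ (2:ℝ) := by
      have h2A : (A + D i) ^ (2:ℝ) ≤ 4 * A ^ (2:ℝ) := by
        have e3 : (A + D i) ^ (2:ℝ) ≤ (2*A) ^ (2:ℝ) :=
          Real.rpow_le_rpow hADi.le (by linarith) (by norm_num)
        rw [Real.mul_rpow (by norm_num) hA.le, h22] at e3
        exact e3
      rcases le_or_gt 0 b with hb | hb
      · have e1 : A ^ a ≤ (A + D i) ^ a :=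
          Real.rpow_le_rpow hA.le (by linarith) ha.le
        have e2 : A ^ a * (A + D i) ^ b ≤ (A + D i) ^ a * (A + D i) ^ b :=
          mul_le_mul_of_nonneg_right e1 (Real.rpow_nonneg hADi.le b)
        rw [← Real.rpow_add hADi, hab] at e2
        exact le_trans e2 h2A
      · have e1 : (A + D i) ^ b ≤ A ^ b :=
          Real.rpow_le_rpow_of_nonpos hA (by linarith) hb.le
        have e2 : A ^ a * (A + D i) ^ b ≤ A ^ a * A ^ b :=
          mul_le_mul_of_nonneg_left e1 (Real.rpow_nonneg hA.le a)
        rw [← Real.rpow_add hA, hab] at e2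
        have h0 : (0:ℝ) ≤ A ^ (2:ℝ) := Real.rpow_nonneg hA.le _
        linarith
    -- step 3
    have step3 : (Xᵀ * (Vmat D A)⁻¹ * X).det ^ (-(1:ℝ)/2) ≤
        c ^ (-(1:ℝ)/2) * ((2:ℝ) ^ ((p:ℝ)/2) * A ^ ((p:ℝ)/2)) := by
      have l1 : (Xᵀ * (Vmat D A)⁻¹ * X).det ^ (-(1:ℝ)/2) ≤
          (c * (A+1) ^ (-(p:ℝ))) ^ (-(1:ℝ)/2) :=
        Real.rpow_le_rpow_of_nonpos (by positivity) (hdetM_lb A hA) (by norm_num)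
      rw [Real.mul_rpow hcpos.le (Real.rpow_nonneg (by linarith) _),
        ← Real.rpow_mul (by linarith : (0:ℝ) ≤ A + 1),
        show (-(p:ℝ)) * (-(1:ℝ)/2) = (p:ℝ)/2 by ring] at l1
      have l2 : (A+1) ^ ((p:ℝ)/2) ≤ (2*A) ^ ((p:ℝ)/2) :=
        Real.rpow_le_rpow (by linarith) (by linarith) (by positivity)
      rw [Real.mul_rpow (by norm_num) hA.le] at l2
      exact le_trans l1 (mul_le_mul_of_nonneg_left l2 (Real.rpow_nonneg hcpos.le _))
    -- step 4
    have step4 : (Vmat D A).det ^ (-(1:ℝ)/2) ≤ A ^ ((m:ℝ) * (-(1:ℝ)/2)) := by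
      have l3 : (Vmat D A).det ^ (-(1:ℝ)/2) ≤ (A ^ (m:ℝ)) ^ (-(1:ℝ)/2) :=
        Real.rpow_le_rpow_of_nonpos (Real.rpow_pos_of_pos hA _) (hdetV_lbA A hA)
          (by norm_num)
      rwa [← Real.rpow_mul hA.le] at l3
    have step5 := hexp_le A hA
    -- combine
    have hcomb : f A ≤ (4 * A ^ (2:ℝ)) *
        ((c ^ (-(1:ℝ)/2) * ((2:ℝ) ^ ((p:ℝ)/2) * A ^ ((p:ℝ)/2)) *
          A ^ ((m:ℝ) * (-(1:ℝ)/2))) * 1) := by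
      simp only [hf_def]
      unfold LRE
      have hnnc : (0:ℝ) ≤ c ^ (-(1:ℝ)/2) * ((2:ℝ) ^ ((p:ℝ)/2) * A ^ ((p:ℝ)/2)) :=
        mul_nonneg (Real.rpow_nonneg hcpos.le _)
          (mul_nonneg (Real.rpow_nonneg (by norm_num) _) (Real.rpow_nonneg hA.le _))
      refine mul_le_mul step2 ?_
        (mul_nonneg (mul_nonneg (Real.rpow_nonneg hd1pos.le _)
          (Real.rpow_nonneg hd2pos.le _)) (Real.exp_pos _).le)
        (by positivity)
      exact mul_le_mul (mul_le_mul step3 step4 (Real.rpow_nonneg hd2pos.le _) hnnc)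
        step5 (Real.exp_pos _).le
        (mul_nonneg hnnc (Real.rpow_nonneg hA.le _))
    have hAe : A ^ (-δ) = A ^ (2:ℝ) * (A ^ ((p:ℝ)/2) * A ^ ((m:ℝ) * (-(1:ℝ)/2))) := by
      rw [← Real.rpow_add hA, ← Real.rpow_add hA]
      congr 1
      rw [hδ_def]; ring
    calc f A ≤ (4 * A ^ (2:ℝ)) *
        ((c ^ (-(1:ℝ)/2) * ((2:ℝ) ^ ((p:ℝ)/2) * A ^ ((p:ℝ)/2)) *
          A ^ ((m:ℝ) * (-(1:ℝ)/2))) * 1) := hcomb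
      _ = K * A ^ (-δ) := by rw [mul_one, hK_def, hAe]; ring
  -- limits
  have hf1 : 0 < f 1 := hfpos 1 one_pos
  have htend0 : Tendsto (fun A : ℝ => A ^ a * C₃ * (c₁ ^ (-(1:ℝ)/2) * d₀ ^ (-(1:ℝ)/2) * 1))
      (nhdsWithin 0 (Set.Ioi 0)) (nhds 0) := by
    have h1 : Tendsto (fun A : ℝ => A ^ a) (nhds 0) (nhds 0) := by
      have := (Real.continuousAt_rpow_const 0 a (Or.inr ha.le))
      simpa [Real.zero_rpow ha.ne'] using this.tendsto
    have h2 := ((h1.mul_const C₃).mul_const (c₁ ^ (-(1:ℝ)/2) * d₀ ^ (-(1:ℝ)/2) * 1))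
    simpa using h2.mono_left nhdsWithin_le_nhds
  have htendinf : Tendsto (fun A : ℝ => K * A ^ (-δ)) atTop (nhds 0) := by
    have := (tendsto_rpow_neg_atTop hδ).const_mul K
    simpa using this
  -- eventually small near 0
  have hev0 : ∀ᶠ A in nhdsWithin 0 (Set.Ioi 0), f A < f 1 := by
    filter_upwards [htend0.eventually_lt_const hf1,
      Ioc_mem_nhdsGT_of_mem (Set.left_mem_Ico.2 one_pos)] with A h1 h2
    exact lt_of_le_of_lt (hb0 A h2.1 h2.2) h1
  obtain ⟨ε, hε, hεsub⟩ := mem_nhdsGT_iff_exists_Ioc_subset.mp hev0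
  have hεpos : 0 < ε := hε
  -- eventually small at infinity
  have hevinf : ∀ᶠ A in atTop, f A < f 1 := by
    filter_upwards [htendinf.eventually_lt_const hf1,
      eventually_ge_atTop (max 1 (D i))] with A h1 h2
    exact lt_of_le_of_lt (hbinf A h2) h1
  obtain ⟨M, hM⟩ := eventually_atTop.mp hevinf
  -- compact interval
  set lo : ℝ := min ε 1 with hlo_def
  set hi : ℝ := max M 1 with hhi_def
  have hlopos : 0 < lo := lt_min hεpos one_pos
  have hlo1 : lo ≤ 1 := min_le_right _ _
  have h1hi : 1 ≤ hi := le_max_right _ _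
  have h1mem : (1:ℝ) ∈ Set.Icc lo hi := ⟨hlo1, h1hi⟩
  have hfc : ContinuousOn f (Set.Icc lo hi) := by
    intro A hA
    have hApos : 0 < A := lt_of_lt_of_le hlopos hA.1
    exact (f_contAt X hX D hD y i a b hApos).continuousWithinAt
  obtain ⟨Ahat, hAhatmem, hmax⟩ := isCompact_Icc.exists_isMaxOn ⟨1, h1mem⟩ hfc
  refine ⟨Ahat, lt_of_lt_of_le hlopos hAhatmem.1, ?_⟩
  intro A hA
  show f A ≤ f Ahat
  by_cases hmem : A ∈ Set.Icc lo hi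
  · exact hmax hmem
  · have h1le : f 1 ≤ f Ahat := hmax h1mem
    have hout : A < lo ∨ hi < A := by
      rcases not_and_or.mp (Set.mem_Icc.not.mp hmem) with h | h
      · exact Or.inl (not_le.mp h)
      · exact Or.inr (not_le.mp h)
    rcases hout with h | h
    · have : f A < f 1 := hεsub ⟨hA, le_of_lt (lt_of_lt_of_le h (min_le_left _ _))⟩
      linarith
    · have : f A < f 1 := hM A (le_of_lt (lt_of_le_of_lt (le_max_left _ _) h))
      linarith
end

section
/- For every A > 0 and every index i with 1 ≤ i ≤ m, the mean squared error of the BLUP satisfies g_{1i}(A) + g_{2i}(A) ≤ D_i. -/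
open Matrix Real

/-- `g_{1i}(A) = A·D_i/(A+D_i)`. -/
noncomputable def g1 {m : ℕ} (D : Fin m → ℝ) (A : ℝ) (i : Fin m) : ℝ :=
  A * D i / (A + D i)

/-- `g_{2i}(A) = B_i²·x_iᵀ(XᵀV⁻¹X)⁻¹x_i` with `B_i = D_i/(A+D_i)` and `x_i` the
`i`-th row of `X`. -/
noncomputable def g2 {m p : ℕ} (X : Matrix (Fin m) (Fin p) ℝ) (D : Fin m → ℝ)
    (A : ℝ) (i : Fin m) : ℝ :=
  (D i / (A + D i)) ^ 2 * (X i ⬝ᵥ ((Xᵀ * (Vmat D A)⁻¹ * X)⁻¹ *ᵥ X i))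

/-- The mean squared error of the BLUP is at most the sampling variance:
for every `A > 0` and every `i`, `g_{1i}(A) + g_{2i}(A) ≤ D_i`. -/
theorem blup_mse_le {m p : ℕ} (hm : 0 < m) (hp : 0 < p)
    (X : Matrix (Fin m) (Fin p) ℝ) (hrank : X.rank = p)
    (D : Fin m → ℝ) (hD : ∀ j, 0 < D j)
    (A : ℝ) (hA : 0 < A) (i : Fin m) :
    g1 D A i + g2 X D A i ≤ D i := by
  classical
  have hAD : ∀ j, 0 < A + D j := fun j => add_pos hA (hD j)
  -- injectivity of mulVec from full column rank
  have hinj : ∀ v : Fin p → ℝ, X *ᵥ v = 0 → v = 0 := by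
    intro v hv
    have hk : LinearMap.ker X.mulVecLin = ⊥ := by
      have h1 := LinearMap.finrank_range_add_finrank_ker X.mulVecLin
      have h2 : Module.finrank ℝ (LinearMap.range X.mulVecLin) = p := hrank
      have h3 : Module.finrank ℝ (Fin p → ℝ) = p := by simp
      have h4 : Module.finrank ℝ (LinearMap.ker X.mulVecLin) = 0 := by omega
      exact Submodule.finrank_eq_zero.mp h4
    have : v ∈ LinearMap.ker X.mulVecLin := by simpa [Matrix.mulVecLin] using hv
    simpa [hk] using this
  set w : Fin m → ℝ := fun j => (A + D j)⁻¹ with hw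
  have hVinv : (Vmat D A)⁻¹ = Matrix.diagonal w := by
    apply Matrix.inv_eq_right_inv
    rw [Vmat, Matrix.diagonal_mul_diagonal]
    rw [show (fun i => (A + D i) * w i) = fun _ => (1:ℝ) from
      funext fun j => mul_inv_cancel₀ (hAD j).ne', Matrix.diagonal_one]
  set M : Matrix (Fin p) (Fin p) ℝ := Xᵀ * (Vmat D A)⁻¹ * X with hM
  -- quadratic form of M
  have hquad : ∀ v : Fin p → ℝ,
      v ⬝ᵥ (M *ᵥ v) = ∑ j, w j * (X *ᵥ v) j ^ 2 := by
    intro v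
    rw [hM, hVinv]
    rw [Matrix.mul_assoc, ← Matrix.mulVec_mulVec, ← Matrix.mulVec_mulVec,
      Matrix.dotProduct_mulVec, Matrix.vecMul_transpose]
    simp [dotProduct, Matrix.mulVec_diagonal, sq, mul_comm, mul_assoc, mul_left_comm]
  have hMposdef : M.PosDef := by
    rw [Matrix.posDef_iff_dotProduct_mulVec]
    constructor
    · have : Mᵀ = M := by
        rw [hM, hVinv]
        simp [Matrix.transpose_mul, Matrix.diagonal_transpose, Matrix.mul_assoc]
      simpa [Matrix.IsHermitian] using this
    · intro v hv
      have hx : X *ᵥ v ≠ 0 := fun h => hv (hinj v h)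
      obtain ⟨j0, hj0⟩ := Function.ne_iff.mp hx
      rw [show star v = v from rfl, hquad]
      apply Finset.sum_pos'
      · intro j _
        have h1 : 0 ≤ w j := (inv_pos.mpr (hAD j)).le
        positivity
      · refine ⟨j0, Finset.mem_univ _, ?_⟩
        have h1 : 0 < w j0 := inv_pos.mpr (hAD j0)
        have h2 : 0 < (X *ᵥ v) j0 ^ 2 := sq_pos_iff.mpr (by simpa using hj0)
        exact mul_pos h1 h2
  have hMunit : IsUnit M.det := hMposdef.det_pos.ne'.isUnit
  set u : Fin p → ℝ := X i with hu
  set y : Fin p → ℝ := M⁻¹ *ᵥ u with hy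
  have hMy : M *ᵥ y = u := by
    rw [hy, Matrix.mulVec_mulVec, Matrix.mul_nonsing_inv _ hMunit, Matrix.one_mulVec]
  set t : ℝ := u ⬝ᵥ y with ht
  have hyMy : y ⬝ᵥ (M *ᵥ y) = t := by
    rw [hMy, ht, dotProduct_comm]
  have hXyi : (X *ᵥ y) i = t := by
    simp [Matrix.mulVec, ht, hu]
  -- t ≥ t²/(A+D i) from the quadratic form
  have hsum : w i * t ^ 2 ≤ t := by
    have hs : ∑ j, w j * (X *ᵥ y) j ^ 2 = t := by rw [← hquad y, hyMy]
    have hle : w i * (X *ᵥ y) i ^ 2 ≤ ∑ j, w j * (X *ᵥ y) j ^ 2 := by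
      refine Finset.single_le_sum (f := fun j => w j * (X *ᵥ y) j ^ 2)
        (fun j _ => ?_) (Finset.mem_univ i)
      have h1 : 0 ≤ w j := (inv_pos.mpr (hAD j)).le
      positivity
    rw [hXyi, hs] at hle
    exact hle
  have htnn : 0 ≤ t := by
    have h1 : 0 ≤ w i * t ^ 2 := by
      have h2 : 0 < w i := inv_pos.mpr (hAD i)
      positivity
    linarith
  have htle : t ≤ A + D i := by
    rcases eq_or_lt_of_le htnn with h | h
    · rw [← h]; exact (hAD i).le
    · have hwi : w i = (A + D i)⁻¹ := rfl
      rw [hwi] at hsum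
      have := hAD i
      rw [inv_mul_le_iff₀ this] at hsum
      have ht2 : t ^ 2 = t * t := sq t
      nlinarith
  -- final arithmetic
  have hg2 : g2 X D A i = (D i / (A + D i)) ^ 2 * t := by
    rw [g2, ht, hy, hu, hM]
  rw [hg2, g1]
  have hADi := hAD i
  have hDi := hD i
  have hkey : (D i / (A + D i)) ^ 2 * t ≤ (D i / (A + D i)) ^ 2 * (A + D i) := by
    apply mul_le_mul_of_nonneg_left htle
    positivity
  have heq : A * D i / (A + D i) + (D i / (A + D i)) ^ 2 * (A + D i) = D i := by
    field_simp
  linarith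
end

section
/- Upper bound on the residual likelihood (key inequality of Appendix A.2). Let D_max = max_{1≤i≤m} D_i and D_min = min_{1≤i≤m} D_i. For every A ≥ 0 and every y ∈ ℝ^m, L_RE(A) ≤ det(XᵀX)^{−1/2} · (A + D_max)^{p/2} · (A + D_min)^{−m/2}. -/
open Matrix Real Filter

lemma one_le_det_one_add {n : Type*} [Fintype n] [DecidableEq n] {M : Matrix n n ℝ}
    (hM : M.PosSemidef) : 1 ≤ (1 + M).det := by
  have hH := hM.1
  set U := (hH.eigenvectorUnitary : Matrix n n ℝ) with hUdef
  have hU : U * star U = 1 := (Matrix.mem_unitaryGroup_iff).mp hH.eigenvectorUnitary.2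
  have hU2 : star U * U = 1 := (Matrix.mem_unitaryGroup_iff').mp hH.eigenvectorUnitary.2
  have h1 : (1 : Matrix n n ℝ) + M
      = U * (1 + Matrix.diagonal (RCLike.ofReal ∘ hH.eigenvalues)) * star U := by
    rw [Matrix.mul_add, Matrix.add_mul, Matrix.mul_one, hU]
    conv_lhs => rw [hH.spectral_theorem]
    rfl
  rw [h1, Matrix.det_mul, Matrix.det_mul, mul_comm, ← mul_assoc, ← Matrix.det_mul, hU2,
    Matrix.det_one, one_mul]
  have : (1 : Matrix n n ℝ) + Matrix.diagonal (RCLike.ofReal ∘ hH.eigenvalues)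
      = Matrix.diagonal (fun i => 1 + hH.eigenvalues i) := by
    rw [← Matrix.diagonal_one, Matrix.diagonal_add]
    rfl
  rw [this, Matrix.det_diagonal]
  have h2 : ∀ i, (1:ℝ) ≤ 1 + hH.eigenvalues i := fun i => by linarith [hM.eigenvalues_nonneg i]
  calc (1:ℝ) = ∏ _i : n, 1 := by simp
  _ ≤ ∏ i : n, (1 + hH.eigenvalues i) :=
    Finset.prod_le_prod (fun i _ => zero_le_one) (fun i _ => h2 i)

open scoped MatrixOrder in
lemma det_le_det_add {n : Type*} [Fintype n] [DecidableEq n] {N S : Matrix n n ℝ}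
    (hN : N.PosDef) (hS : S.PosSemidef) : N.det ≤ (N + S).det := by
  set C := CFC.sqrt N with hCdef
  have hC : C * C = N := CFC.sqrt_mul_sqrt_self N hN.posSemidef.nonneg
  have hCps : C.PosSemidef := (CFC.sqrt_nonneg N).posSemidef
  have hCC : C.det * C.det = N.det := by rw [← Matrix.det_mul, hC]
  have hCdet : IsUnit C.det := by
    have h0 : C.det ≠ 0 := fun h => by
      rw [h, mul_zero] at hCC; exact hN.det_pos.ne' hCC.symm
    exact h0.isUnit
  have hCi : C * C⁻¹ = 1 := Matrix.mul_nonsing_inv _ hCdet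
  have hiC : C⁻¹ * C = 1 := Matrix.nonsing_inv_mul _ hCdet
  have hCiH : (C⁻¹)ᴴ = C⁻¹ := hCps.1.inv
  have hMps : (C⁻¹ * S * C⁻¹).PosSemidef := by
    have := hS.conjTranspose_mul_mul_same (C⁻¹)
    rwa [hCiH] at this
  have key : N + S = C * (1 + C⁻¹ * S * C⁻¹) * C := by
    calc N + S = C * C + (C * C⁻¹) * S * (C⁻¹ * C) := by rw [hC, hCi, hiC, one_mul, mul_one]
    _ = C * (1 + C⁻¹ * S * C⁻¹) * C := by noncomm_ring
  rw [key, Matrix.det_mul, Matrix.det_mul]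
  calc N.det = N.det * 1 := (mul_one _).symm
  _ ≤ N.det * (1 + C⁻¹ * S * C⁻¹).det :=
      mul_le_mul_of_nonneg_left (one_le_det_one_add hMps) hN.det_pos.le
  _ = C.det * (1 + C⁻¹ * S * C⁻¹).det * C.det := by rw [← hCC]; ring

lemma posDef_conj_tr {m p : ℕ} {W : Matrix (Fin m) (Fin m) ℝ} (hW : W.PosDef)
    (X : Matrix (Fin m) (Fin p) ℝ) (hinj : Function.Injective X.mulVec) :
    (Xᵀ * W * X).PosDef := by
  refine Matrix.PosDef.of_dotProduct_mulVec_pos ?_ ?_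
  · have h := Matrix.isHermitian_conjTranspose_mul_mul X hW.1
    rwa [Matrix.conjTranspose_eq_transpose_of_trivial] at h
  · intro x hx
    have hXx : X *ᵥ x ≠ 0 := fun h => hx (by
      have := hinj (show X *ᵥ x = X *ᵥ 0 by simp [h])
      simpa using this)
    have h2 := hW.dotProduct_mulVec_pos hXx
    simpa [Matrix.dotProduct_mulVec, Matrix.vecMul_transpose, ← Matrix.mulVec_mulVec,
      Matrix.vecMul_vecMul, star_trivial] using h2

/-- Key inequality of Appendix A.2: for every `A ≥ 0` and every `y`,
`L_RE(A) ≤ det(XᵀX)^{−1/2}·(A+D_max)^{p/2}·(A+D_min)^{−m/2}`. -/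
theorem LRE_upper_bound {m p : ℕ} (hm : 0 < m) (hp : 0 < p)
    (X : Matrix (Fin m) (Fin p) ℝ) (hrank : X.rank = p)
    (D : Fin m → ℝ) (hD : ∀ j, 0 < D j)
    (Dmax Dmin : ℝ)
    (hDmax : Dmax =
      Finset.univ.sup' (Finset.univ_nonempty_iff.mpr (Fin.pos_iff_nonempty.mp hm)) D)
    (hDmin : Dmin =
      Finset.univ.inf' (Finset.univ_nonempty_iff.mpr (Fin.pos_iff_nonempty.mp hm)) D)
    (A : ℝ) (hA : 0 ≤ A) (y : Fin m → ℝ) :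
    LRE X D y A ≤
      (Xᵀ * X).det ^ (-(1 : ℝ) / 2) * (A + Dmax) ^ ((p : ℝ) / 2) *
        (A + Dmin) ^ (-(m : ℝ) / 2) := by
  have hinj : Function.Injective X.mulVec := mulVec_inj X hrank
  set c : Fin m → ℝ := fun i => A + D i with hcdef
  have hc : ∀ i, 0 < c i := fun i => add_pos_of_nonneg_of_pos hA (hD i)
  -- Dmax/Dmin facts
  have hne : (Finset.univ : Finset (Fin m)).Nonempty :=
    Finset.univ_nonempty_iff.mpr (Fin.pos_iff_nonempty.mp hm)
  have hDmax_le : ∀ i, D i ≤ Dmax := fun i => hDmax ▸ Finset.le_sup' D (Finset.mem_univ i)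
  have hDmin_le : ∀ i, Dmin ≤ D i := fun i => hDmin ▸ Finset.inf'_le D (Finset.mem_univ i)
  have hDmin_pos : 0 < Dmin := by
    obtain ⟨j, _, hj⟩ := Finset.exists_mem_eq_inf' hne D
    rw [hDmin, hj]; exact hD j
  have hq : 0 < A + Dmax := by have := hD ⟨0, hm⟩; have := hDmax_le ⟨0, hm⟩; linarith
  have hr : 0 < A + Dmin := by linarith
  set q := A + Dmax with hqdef
  set r := A + Dmin with hrdef
  have hcq : ∀ i, c i ≤ q := fun i => by
    have h := hDmax_le i
    show A + D i ≤ A + Dmax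
    linarith
  have hrc : ∀ i, r ≤ c i := fun i => by
    have h := hDmin_le i
    show A + Dmin ≤ A + D i
    linarith
  -- V and its inverse
  have hV : Vmat D A = Matrix.diagonal c := rfl
  have hVinv : (Vmat D A)⁻¹ = Matrix.diagonal (fun i => (c i)⁻¹) := by
    apply Matrix.inv_eq_right_inv
    rw [hV, Matrix.diagonal_mul_diagonal,
      show (fun i => c i * (c i)⁻¹) = fun _ : Fin m => (1:ℝ) from
        funext fun i => mul_inv_cancel₀ (hc i).ne', Matrix.diagonal_one]
  set W := Matrix.diagonal (fun i => (c i)⁻¹) with hWdef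
  have hWpd : W.PosDef := Matrix.PosDef.diagonal (fun i => inv_pos.mpr (hc i))
  have hWt : Wᵀ = W := Matrix.diagonal_transpose _
  -- B
  set B := Xᵀ * W * X with hBdef
  have hBpd : B.PosDef := posDef_conj_tr hWpd X hinj
  have hBu : IsUnit B.det := hBpd.det_pos.ne'.isUnit
  have hBH : Bᴴ = B := hBpd.1
  have hBt : Bᵀ = B := by
    rw [← Matrix.conjTranspose_eq_transpose_of_trivial]; exact hBH
  have hBit : (B⁻¹)ᵀ = B⁻¹ := by rw [Matrix.transpose_nonsing_inv, hBt]
  -- the projection identity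
  set K := W * X * B⁻¹ * Xᵀ with hKdef
  have hKt : Kᵀ = X * B⁻¹ * Xᵀ * W := by
    simp only [hKdef, Matrix.transpose_mul, Matrix.transpose_transpose, hBit, hWt,
      Matrix.mul_assoc]
  have hmid : B⁻¹ * (Xᵀ * (W * X)) = 1 := by
    rw [show Xᵀ * (W * X) = B by rw [hBdef, Matrix.mul_assoc]]
    exact Matrix.nonsing_inv_mul _ hBu
  have hKK : K * K = K := by
    calc K * K = W * (X * ((B⁻¹ * (Xᵀ * (W * X))) * (B⁻¹ * Xᵀ))) := by
          simp only [hKdef, Matrix.mul_assoc]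
    _ = K := by rw [hmid, Matrix.one_mul]; simp only [hKdef, Matrix.mul_assoc]
  have hWKt : W * Kᵀ = K * W := by
    rw [hKt]; simp only [hKdef, Matrix.mul_assoc]
  have hPfact : Pmat X D A = (1 - K) * W * (1 - K)ᵀ := by
    have hexp : (1 - K) * W * (1 - K)ᵀ = W - K * W - (W * Kᵀ - K * (W * Kᵀ)) := by
      rw [Matrix.transpose_sub, Matrix.transpose_one]
      noncomm_ring
    rw [hexp, hWKt, ← Matrix.mul_assoc, hKK]
    rw [Pmat, hVinv, ← hBdef, ← hKdef]
    abel
  have hPps : (Pmat X D A).PosSemidef := by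
    rw [hPfact, ← Matrix.conjTranspose_eq_transpose_of_trivial]
    exact hWpd.posSemidef.mul_mul_conjTranspose_same (1 - K)
  have hyPy : 0 ≤ y ⬝ᵥ (Pmat X D A *ᵥ y) := by
    have := hPps.dotProduct_mulVec_nonneg y
    simpa using this
  -- determinant bounds
  have hVdet : (Vmat D A).det = ∏ i, c i := by rw [hV, Matrix.det_diagonal]
  have hVdet_pos : 0 < (Vmat D A).det := by
    rw [hVdet]; exact Finset.prod_pos fun i _ => hc i
  have hVdet_ge : r ^ m ≤ (Vmat D A).det := by
    rw [hVdet]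
    calc r ^ m = ∏ _i : Fin m, r := by simp
    _ ≤ ∏ i, c i := Finset.prod_le_prod (fun i _ => hr.le) (fun i _ => hrc i)
  -- B determinant lower bound
  set N := Xᵀ * Matrix.diagonal (fun _ : Fin m => q⁻¹) * X with hNdef
  have hNpd : N.PosDef := posDef_conj_tr
    (Matrix.PosDef.diagonal (fun _ => inv_pos.mpr hq)) X hinj
  set S := Xᵀ * Matrix.diagonal (fun i => (c i)⁻¹ - q⁻¹) * X with hSdef
  have hSps : S.PosSemidef := by
    have hd : (Matrix.diagonal (fun i => (c i)⁻¹ - q⁻¹)).PosSemidef :=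
      Matrix.PosSemidef.diagonal (fun i => by
        have h1 := inv_anti₀ (hc i) (hcq i)
        simp only [Pi.zero_apply]
        linarith)
    have := hd.conjTranspose_mul_mul_same X
    rwa [Matrix.conjTranspose_eq_transpose_of_trivial] at this
  have hBsplit : N + S = B := by
    rw [hNdef, hSdef, ← Matrix.add_mul, ← Matrix.mul_add]
    simp only [Matrix.diagonal_add]
    rw [hBdef, hWdef,
      show (fun i => q⁻¹ + ((c i)⁻¹ - q⁻¹)) = fun i => (c i)⁻¹ from funext fun i => by ring]
  have hXXpd : (Xᵀ * X).PosDef := by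
    have := posDef_conj_tr Matrix.PosDef.one X hinj
    rwa [Matrix.mul_one] at this
  have hNdet : N.det = q⁻¹ ^ p * (Xᵀ * X).det := by
    rw [hNdef, ← Matrix.smul_one_eq_diagonal]
    rw [Matrix.mul_smul, Matrix.mul_one, Matrix.smul_mul, Matrix.det_smul]
    simp
  have hBdet_ge : q⁻¹ ^ p * (Xᵀ * X).det ≤ B.det := by
    rw [← hNdet, ← hBsplit]; exact det_le_det_add hNpd hSps
  have hqp_pos : 0 < q⁻¹ ^ p * (Xᵀ * X).det :=
    mul_pos (pow_pos (inv_pos.mpr hq) p) hXXpd.det_pos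
  -- rpow manipulations
  have hexp1 : Real.exp (-(y ⬝ᵥ (Pmat X D A *ᵥ y)) / 2) ≤ 1 :=
    Real.exp_le_one_iff.mpr (by linarith)
  have h2 : (Vmat D A).det ^ (-(1:ℝ)/2) ≤ r ^ (-(m:ℝ)/2) := by
    have := Real.rpow_le_rpow_of_nonpos (pow_pos hr m) hVdet_ge (by norm_num :
      (-(1:ℝ)/2) ≤ 0)
    calc (Vmat D A).det ^ (-(1:ℝ)/2) ≤ ((r : ℝ) ^ m) ^ (-(1:ℝ)/2) := this
    _ = r ^ (-(m:ℝ)/2) := by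
        rw [← Real.rpow_natCast r m, ← Real.rpow_mul hr.le]
        congr 1
        ring
  have h3 : (Xᵀ * (Vmat D A)⁻¹ * X).det ^ (-(1:ℝ)/2)
      ≤ (Xᵀ * X).det ^ (-(1:ℝ)/2) * q ^ ((p:ℝ)/2) := by
    have hB' : (Xᵀ * (Vmat D A)⁻¹ * X) = B := by rw [hVinv]
    rw [hB']
    have hmono := Real.rpow_le_rpow_of_nonpos hqp_pos hBdet_ge (by norm_num :
      (-(1:ℝ)/2) ≤ 0)
    calc B.det ^ (-(1:ℝ)/2) ≤ (q⁻¹ ^ p * (Xᵀ * X).det) ^ (-(1:ℝ)/2) := hmono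
    _ = (q⁻¹ ^ p) ^ (-(1:ℝ)/2) * (Xᵀ * X).det ^ (-(1:ℝ)/2) :=
        Real.mul_rpow (by positivity) hXXpd.det_pos.le
    _ = q ^ ((p:ℝ)/2) * (Xᵀ * X).det ^ (-(1:ℝ)/2) := by
        congr 1
        rw [← Real.rpow_natCast q⁻¹ p, ← Real.rpow_mul (inv_pos.mpr hq).le,
          Real.inv_rpow hq.le, ← Real.rpow_neg hq.le]
        congr 1
        ring
    _ = (Xᵀ * X).det ^ (-(1:ℝ)/2) * q ^ ((p:ℝ)/2) := mul_comm _ _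
  -- combine
  rw [LRE]
  have hBdpos : 0 < (Xᵀ * (Vmat D A)⁻¹ * X).det := by
    rw [show (Xᵀ * (Vmat D A)⁻¹ * X) = B by rw [hVinv]]
    exact hBpd.det_pos
  have ht1 : 0 ≤ (Xᵀ * (Vmat D A)⁻¹ * X).det ^ (-(1:ℝ)/2) := Real.rpow_nonneg hBdpos.le _
  have ht2 : 0 ≤ (Vmat D A).det ^ (-(1:ℝ)/2) := Real.rpow_nonneg hVdet_pos.le _
  calc (Xᵀ * (Vmat D A)⁻¹ * X).det ^ (-(1:ℝ)/2) * (Vmat D A).det ^ (-(1:ℝ)/2) *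
        Real.exp (-(y ⬝ᵥ (Pmat X D A *ᵥ y)) / 2)
      ≤ (Xᵀ * (Vmat D A)⁻¹ * X).det ^ (-(1:ℝ)/2) * (Vmat D A).det ^ (-(1:ℝ)/2) * 1 :=
        mul_le_mul_of_nonneg_left hexp1 (mul_nonneg ht1 ht2)
  _ = (Xᵀ * (Vmat D A)⁻¹ * X).det ^ (-(1:ℝ)/2) * (Vmat D A).det ^ (-(1:ℝ)/2) := mul_one _
  _ ≤ ((Xᵀ * X).det ^ (-(1:ℝ)/2) * q ^ ((p:ℝ)/2)) * (r ^ (-(m:ℝ)/2)) := by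
      exact mul_le_mul h3 h2 ht2
        (mul_nonneg (Real.rpow_nonneg hXXpd.det_pos.le _) (Real.rpow_nonneg hq.le _))
  _ = (Xᵀ * X).det ^ (-(1:ℝ)/2) * q ^ ((p:ℝ)/2) * r ^ (-(m:ℝ)/2) := by ring
end

section
/- Tail decay of the NAS adjusted likelihood. Fix a real number z and y ∈ ℝ^m. If m > p + (1+z²)/2, then A^{(1+z²)/4} · L_RE(A) → 0 as A → ∞; indeed A^{(1+z²)/4} L_RE(A) is bounded above by det(XᵀX)^{−1/2}·A^{(1+z²)/4}·(A+max_i D_i)^{p/2}·(A+min_i D_i)^{−m/2}, which is O(A^{(1+z²)/4 − (m−p)/2}) as A → ∞. -/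
open Matrix Real Filter

lemma aux_one_le_det_one_add {n : Type*} [Fintype n] [DecidableEq n]
    {N : Matrix n n ℝ} (hN : N.PosSemidef) : 1 ≤ (1 + N).det := by
  set U : Matrix n n ℝ := (hN.1.eigenvectorUnitary : Matrix n n ℝ) with hUdef
  have hUU : U * star U = 1 := Matrix.mem_unitaryGroup_iff.mp hN.1.eigenvectorUnitary.2
  set d : n → ℝ := hN.1.eigenvalues with hddef
  have hspec : N = U * Matrix.diagonal d * star U := by
    simpa using hN.1.spectral_theorem
  have key : 1 + N = U * (1 + Matrix.diagonal d) * star U := by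
    rw [Matrix.mul_add, Matrix.add_mul, Matrix.mul_one, hUU, hspec]
  have hdet : (1 + N).det = (1 + Matrix.diagonal d).det := by
    rw [key, Matrix.det_mul, Matrix.det_mul]
    have h1 : U.det * (star U).det = 1 := by rw [← Matrix.det_mul, hUU, Matrix.det_one]
    calc U.det * (1 + Matrix.diagonal d).det * (star U).det
        = (1 + Matrix.diagonal d).det * (U.det * (star U).det) := by ring
      _ = (1 + Matrix.diagonal d).det := by rw [h1, mul_one]
  rw [hdet, ← Matrix.diagonal_one, Matrix.diagonal_add, Matrix.det_diagonal]
  have hle : ∀ i ∈ (Finset.univ : Finset n), (1 : ℝ) ≤ ((1 : n → ℝ) + d) i := by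
    intro i _
    have := hN.eigenvalues_nonneg i
    simp only [Pi.add_apply, Pi.one_apply]
    linarith
  calc (1:ℝ) = ∏ _i : n, (1:ℝ) := by simp
    _ ≤ ∏ i, ((1 : n → ℝ) + d) i := Finset.prod_le_prod (by simp) hle

open scoped MatrixOrder in
lemma aux_det_le_det_add {n : Type*} [Fintype n] [DecidableEq n]
    {B E : Matrix n n ℝ} (hB : B.PosDef) (hE : E.PosSemidef) : B.det ≤ (B + E).det := by
  set R : Matrix n n ℝ := CFC.sqrt B with hRdef
  have hRR : R * R = B := CFC.sqrt_mul_sqrt_self B (Matrix.nonneg_iff_posSemidef.mpr hB.posSemidef)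
  have hRherm : R.IsHermitian := (Matrix.nonneg_iff_posSemidef.mp (CFC.sqrt_nonneg B)).1
  have hBdet : 0 < B.det := hB.det_pos
  have hRdet2 : R.det * R.det = B.det := by rw [← Matrix.det_mul, hRR]
  have hRdetne : R.det ≠ 0 := by intro h; rw [h, mul_zero] at hRdet2; linarith
  have hRunit : IsUnit R.det := hRdetne.isUnit
  have hRinv : R * R⁻¹ = 1 := Matrix.mul_nonsing_inv _ hRunit
  have hRinv' : R⁻¹ * R = 1 := Matrix.nonsing_inv_mul _ hRunit
  have hRinvherm : (R⁻¹)ᴴ = R⁻¹ := hRherm.inv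
  have hM : (R⁻¹ * E * R⁻¹).PosSemidef := by
    have := hE.conjTranspose_mul_mul_same R⁻¹
    rwa [hRinvherm] at this
  have hEeq : R * (R⁻¹ * E * R⁻¹) * R = E := by
    calc R * (R⁻¹ * E * R⁻¹) * R = (R * R⁻¹) * E * (R⁻¹ * R) := by
          simp only [Matrix.mul_assoc]
      _ = E := by rw [hRinv, hRinv', Matrix.one_mul, Matrix.mul_one]
  have key : B + E = R * (1 + R⁻¹ * E * R⁻¹) * R := by
    rw [Matrix.mul_add, Matrix.mul_one, Matrix.add_mul, hRR, hEeq]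
  have h1 : 1 ≤ (1 + R⁻¹ * E * R⁻¹).det := aux_one_le_det_one_add hM
  calc B.det = B.det * 1 := (mul_one _).symm
    _ ≤ B.det * (1 + R⁻¹ * E * R⁻¹).det := by
        exact mul_le_mul_of_nonneg_left h1 hBdet.le
    _ = (B + E).det := by
        rw [key, Matrix.det_mul, Matrix.det_mul]
        nlinarith [hRdet2]

lemma aux_mulVec_inj {m p : ℕ} (X : Matrix (Fin m) (Fin p) ℝ) (hrank : X.rank = p) :
    ∀ v : Fin p → ℝ, X *ᵥ v = 0 → v = 0 := by
  have h := LinearMap.finrank_range_add_finrank_ker X.mulVecLin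
  have hr : Module.finrank ℝ (LinearMap.range X.mulVecLin) = p := hrank
  have hd : Module.finrank ℝ (Fin p → ℝ) = p := Module.finrank_fin_fun ℝ
  have hker0 : Module.finrank ℝ (LinearMap.ker X.mulVecLin) = 0 := by omega
  have hker : LinearMap.ker X.mulVecLin = ⊥ := Submodule.finrank_eq_zero.mp hker0
  intro v hv
  have hmem : v ∈ LinearMap.ker X.mulVecLin := by
    simpa [Matrix.mulVecLin_apply] using hv
  simpa [hker] using hmem

lemma aux_posDef_transpose_mul_mul {m p : ℕ} (X : Matrix (Fin m) (Fin p) ℝ)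
    (hX : ∀ v : Fin p → ℝ, X *ᵥ v = 0 → v = 0)
    {W : Matrix (Fin m) (Fin m) ℝ} (hW : W.PosDef) : (Xᵀ * W * X).PosDef := by
  have hXt : Xᵀ = Xᴴ := (Matrix.conjTranspose_eq_transpose_of_trivial X).symm
  refine Matrix.PosDef.of_dotProduct_mulVec_pos ?_ ?_
  · rw [hXt]
    exact Matrix.isHermitian_conjTranspose_mul_mul X hW.1
  · intro v hv
    have hXv : X *ᵥ v ≠ 0 := fun h => hv (hX v h)
    have h := hW.dotProduct_mulVec_pos hXv
    rw [hXt]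
    simpa only [star_mulVec, Matrix.dotProduct_mulVec, Matrix.vecMul_vecMul] using h

lemma aux_Vinv {m : ℕ} (D : Fin m → ℝ) {A : ℝ} (hd : ∀ i, 0 < A + D i) :
    (Vmat D A)⁻¹ = Matrix.diagonal (fun i => (A + D i)⁻¹) := by
  apply Matrix.inv_eq_right_inv
  rw [Vmat, Matrix.diagonal_mul_diagonal]
  rw [show (fun i => (A + D i) * (A + D i)⁻¹) = fun _ => (1 : ℝ) from
    funext fun i => mul_inv_cancel₀ (hd i).ne', Matrix.diagonal_one]

lemma aux_Pmat_posSemidef {m p : ℕ} (X : Matrix (Fin m) (Fin p) ℝ) (D : Fin m → ℝ)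
    (hX : ∀ v : Fin p → ℝ, X *ᵥ v = 0 → v = 0) {A : ℝ} (hd : ∀ i, 0 < A + D i) :
    (Pmat X D A).PosSemidef := by
  set W : Matrix (Fin m) (Fin m) ℝ := (Vmat D A)⁻¹ with hWdef
  have hVinv : W = Matrix.diagonal (fun i => (A + D i)⁻¹) := aux_Vinv D hd
  have hWpd : W.PosDef := by
    rw [hVinv]; exact Matrix.PosDef.diagonal (fun i => inv_pos.2 (hd i))
  have hWsymm : Wᵀ = W := by rw [hVinv, Matrix.diagonal_transpose]
  set S : Matrix (Fin p) (Fin p) ℝ := Xᵀ * W * X with hSdef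
  have hSpd : S.PosDef := aux_posDef_transpose_mul_mul X hX hWpd
  have hSunit : IsUnit S.det := hSpd.det_pos.ne'.isUnit
  have hSS : S⁻¹ * S = 1 := Matrix.nonsing_inv_mul _ hSunit
  have hSsymm : Sᵀ = S := by
    rw [hSdef, Matrix.transpose_mul, Matrix.transpose_mul, Matrix.transpose_transpose,
      hWsymm, Matrix.mul_assoc]
  have hSinvsymm : (S⁻¹)ᵀ = S⁻¹ := by rw [Matrix.transpose_nonsing_inv, hSsymm]
  set T : Matrix (Fin m) (Fin m) ℝ := X * S⁻¹ * Xᵀ * W with hTdef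
  have hTt : Tᵀ = W * X * S⁻¹ * Xᵀ := by
    rw [hTdef]
    simp only [Matrix.transpose_mul, Matrix.transpose_transpose, hWsymm, hSinvsymm]
    simp only [Matrix.mul_assoc]
  set Q : Matrix (Fin m) (Fin m) ℝ := 1 - T with hQdef
  set K : Matrix (Fin m) (Fin m) ℝ := W * (X * (S⁻¹ * (Xᵀ * W))) with hKdef
  have h1 : W * T = K := by rw [hTdef, hKdef]; simp only [Matrix.mul_assoc]
  have h2 : Tᵀ * W = K := by rw [hTt, hKdef]; simp only [Matrix.mul_assoc]
  have h3 : Tᵀ * (W * T) = K := by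
    rw [hTt, h1]
    have hmid : Xᵀ * (W * (X * (S⁻¹ * (Xᵀ * W)))) = S * (S⁻¹ * (Xᵀ * W)) := by
      rw [hSdef]; simp only [Matrix.mul_assoc]
    calc W * X * S⁻¹ * Xᵀ * K
        = W * (X * (S⁻¹ * (Xᵀ * (W * (X * (S⁻¹ * (Xᵀ * W))))))) := by
          rw [hKdef]; simp only [Matrix.mul_assoc]
      _ = W * (X * (S⁻¹ * (S * (S⁻¹ * (Xᵀ * W))))) := by rw [hmid]
      _ = K := by rw [← Matrix.mul_assoc S⁻¹ S, hSS, Matrix.one_mul, hKdef]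
  have hPeq : Pmat X D A = Qᵀ * W * Q := by
    have hexp : Qᵀ * W * Q = W - W * T - Tᵀ * W + Tᵀ * (W * T) := by
      rw [hQdef, Matrix.transpose_sub, Matrix.transpose_one, Matrix.sub_mul, Matrix.sub_mul,
        Matrix.mul_sub, Matrix.mul_sub, Matrix.one_mul, Matrix.mul_one, Matrix.mul_assoc]
      simp only [Matrix.mul_one, Matrix.one_mul, Matrix.mul_assoc]
      abel
    rw [hexp, h3, h2, h1]
    have hP : Pmat X D A = W - K := by
      rw [Pmat, ← hWdef, ← hSdef, hKdef]
      simp only [Matrix.mul_assoc]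
    rw [hP]
    abel
  have := hWpd.posSemidef.conjTranspose_mul_mul_same Q
  rwa [Matrix.conjTranspose_eq_transpose_of_trivial, ← hPeq] at this

/-- Tail decay of the NAS adjusted likelihood: if `m > p + (1+z²)/2`, then
`A^{(1+z²)/4}·L_RE(A) → 0` as `A → ∞`; indeed it is bounded above by
`det(XᵀX)^{−1/2}·A^{(1+z²)/4}·(A+D_max)^{p/2}·(A+D_min)^{−m/2}`, which is
`O(A^{(1+z²)/4 − (m−p)/2})` as `A → ∞`. -/
theorem nas_adjusted_likelihood_tail {m p : ℕ} (hm : 0 < m) (hp : 0 < p)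
    (X : Matrix (Fin m) (Fin p) ℝ) (hrank : X.rank = p)
    (D : Fin m → ℝ) (hD : ∀ j, 0 < D j)
    (z : ℝ) (y : Fin m → ℝ)
    (Dmax Dmin : ℝ)
    (hDmax : Dmax =
      Finset.univ.sup' (Finset.univ_nonempty_iff.mpr (Fin.pos_iff_nonempty.mp hm)) D)
    (hDmin : Dmin =
      Finset.univ.inf' (Finset.univ_nonempty_iff.mpr (Fin.pos_iff_nonempty.mp hm)) D)
    (hcond : (m : ℝ) > (p : ℝ) + (1 + z ^ 2) / 2) :
    Filter.Tendsto (fun A : ℝ => A ^ ((1 + z ^ 2) / 4) * LRE X D y A)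
      Filter.atTop (nhds 0) ∧
    (∀ A : ℝ, 0 < A →
      A ^ ((1 + z ^ 2) / 4) * LRE X D y A ≤
        (Xᵀ * X).det ^ (-(1 : ℝ) / 2) * A ^ ((1 + z ^ 2) / 4) *
          (A + Dmax) ^ ((p : ℝ) / 2) * (A + Dmin) ^ (-(m : ℝ) / 2)) ∧
    (fun A : ℝ =>
        (Xᵀ * X).det ^ (-(1 : ℝ) / 2) * A ^ ((1 + z ^ 2) / 4) *
          (A + Dmax) ^ ((p : ℝ) / 2) * (A + Dmin) ^ (-(m : ℝ) / 2))
      =O[Filter.atTop]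
        (fun A : ℝ => A ^ ((1 + z ^ 2) / 4 - ((m : ℝ) - (p : ℝ)) / 2)) := by
  have hXinj := aux_mulVec_inj X hrank
  have hXtXpd : (Xᵀ * X).PosDef := by
    have h := aux_posDef_transpose_mul_mul X hXinj (Matrix.PosDef.one (n := Fin m) (R := ℝ))
    rwa [Matrix.mul_one] at h
  have hdX : 0 < (Xᵀ * X).det := hXtXpd.det_pos
  have i0 : Fin m := ⟨0, hm⟩
  have hDmaxpos : 0 < Dmax := by
    have h := Finset.le_sup' D (Finset.mem_univ i0)
    rw [hDmax]; exact lt_of_lt_of_le (hD i0) h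
  have hDminpos : 0 < Dmin := by
    rw [hDmin]; exact Finset.lt_inf'_iff _ |>.mpr fun i _ => hD i
  have hDle : ∀ i, D i ≤ Dmax := fun i => hDmax ▸ Finset.le_sup' D (Finset.mem_univ i)
  have hDge : ∀ i, Dmin ≤ D i := fun i => hDmin ▸ Finset.inf'_le D (Finset.mem_univ i)
  have master : ∀ A : ℝ, 0 < A →
      0 < LRE X D y A ∧
      A ^ ((1 + z ^ 2) / 4) * LRE X D y A ≤
        (Xᵀ * X).det ^ (-(1 : ℝ) / 2) * A ^ ((1 + z ^ 2) / 4) *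
          (A + Dmax) ^ ((p : ℝ) / 2) * (A + Dmin) ^ (-(m : ℝ) / 2) := by
    intro A hA
    have hd : ∀ i, 0 < A + D i := fun i => by linarith [hD i]
    have hc : 0 < A + Dmax := by linarith
    have hmn : 0 < A + Dmin := by linarith
    have hVinv : (Vmat D A)⁻¹ = Matrix.diagonal (fun i => (A + D i)⁻¹) := aux_Vinv D hd
    have hWpd : ((Vmat D A)⁻¹).PosDef := by
      rw [hVinv]; exact Matrix.PosDef.diagonal (fun i => inv_pos.2 (hd i))
    have hdetV : (Vmat D A).det = ∏ i, (A + D i) := by rw [Vmat, Matrix.det_diagonal]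
    have hdetVpos : 0 < (Vmat D A).det := by
      rw [hdetV]; exact Finset.prod_pos fun i _ => hd i
    have hSpd : (Xᵀ * (Vmat D A)⁻¹ * X).PosDef := aux_posDef_transpose_mul_mul X hXinj hWpd
    have hdS : 0 < (Xᵀ * (Vmat D A)⁻¹ * X).det := hSpd.det_pos
    -- det V lower bound
    have hdVlb : (A + Dmin) ^ (m : ℕ) ≤ (Vmat D A).det := by
      rw [hdetV]
      calc (A + Dmin) ^ (m : ℕ) = ∏ _i : Fin m, (A + Dmin) := by
            rw [Finset.prod_const, Finset.card_univ, Fintype.card_fin]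
        _ ≤ ∏ i, (A + D i) :=
            Finset.prod_le_prod (fun i _ => hmn.le) (fun i _ => by linarith [hDge i])
    -- det S lower bound
    have hEpsd : (Matrix.diagonal (fun i => (A + Dmax) * (A + D i)⁻¹ - 1)).PosSemidef := by
      apply Matrix.PosSemidef.diagonal
      intro i
      simp only [Pi.zero_apply]
      have h1 : A + D i ≤ A + Dmax := by linarith [hDle i]
      have : (1 : ℝ) ≤ (A + Dmax) * (A + D i)⁻¹ := by
        rw [← div_eq_mul_inv, le_div_iff₀ (hd i), one_mul]; exact h1
      linarith
    have hsplit : (A + Dmax) • (Xᵀ * (Vmat D A)⁻¹ * X) =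
        Xᵀ * X + Xᵀ * Matrix.diagonal (fun i => (A + Dmax) * (A + D i)⁻¹ - 1) * X := by
      have h1 : (A + Dmax) • (Vmat D A)⁻¹ =
          Matrix.diagonal (fun i => (A + Dmax) * (A + D i)⁻¹) := by
        rw [hVinv, ← Matrix.diagonal_smul]
        congr 1
      have h2 : Matrix.diagonal (fun i => (A + Dmax) * (A + D i)⁻¹) =
          1 + Matrix.diagonal (fun i => (A + Dmax) * (A + D i)⁻¹ - 1) := by
        rw [← Matrix.diagonal_one, Matrix.diagonal_add]
        funext i
        simp
      calc (A + Dmax) • (Xᵀ * (Vmat D A)⁻¹ * X)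
          = Xᵀ * ((A + Dmax) • (Vmat D A)⁻¹) * X := by
            rw [Matrix.mul_smul, Matrix.smul_mul]
        _ = Xᵀ * (1 + Matrix.diagonal (fun i => (A + Dmax) * (A + D i)⁻¹ - 1)) * X := by
            rw [h1, h2]
        _ = Xᵀ * X + Xᵀ * Matrix.diagonal (fun i => (A + Dmax) * (A + D i)⁻¹ - 1) * X := by
            rw [Matrix.mul_add, Matrix.add_mul, Matrix.mul_one]
    have hdetle : (Xᵀ * X).det ≤ (A + Dmax) ^ (p : ℕ) * (Xᵀ * (Vmat D A)⁻¹ * X).det := by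
      have hXEX : (Xᵀ * Matrix.diagonal (fun i => (A + Dmax) * (A + D i)⁻¹ - 1) * X).PosSemidef := by
        have h := hEpsd.conjTranspose_mul_mul_same X
        rwa [Matrix.conjTranspose_eq_transpose_of_trivial] at h
      have h := aux_det_le_det_add hXtXpd hXEX
      rw [← hsplit, Matrix.det_smul, Fintype.card_fin] at h
      exact h
    -- rpow bounds
    have e2 : (Vmat D A).det ^ (-(1 : ℝ) / 2) ≤ (A + Dmin) ^ (-(m : ℝ) / 2) := by
      have hpm : (0 : ℝ) < (A + Dmin) ^ (m : ℕ) := pow_pos hmn m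
      have h := Real.rpow_le_rpow_of_nonpos hpm hdVlb (by norm_num : -(1 : ℝ) / 2 ≤ 0)
      calc (Vmat D A).det ^ (-(1 : ℝ) / 2) ≤ ((A + Dmin) ^ (m : ℕ)) ^ (-(1 : ℝ) / 2) := h
        _ = (A + Dmin) ^ (-(m : ℝ) / 2) := by
            rw [← Real.rpow_natCast (A + Dmin) m, ← Real.rpow_mul hmn.le]
            congr 1
            ring
    have e1 : (Xᵀ * (Vmat D A)⁻¹ * X).det ^ (-(1 : ℝ) / 2) ≤
        (Xᵀ * X).det ^ (-(1 : ℝ) / 2) * (A + Dmax) ^ ((p : ℝ) / 2) := by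
      have hcp : (0 : ℝ) < (A + Dmax) ^ (p : ℕ) := pow_pos hc p
      have hlb : (Xᵀ * X).det * ((A + Dmax) ^ (p : ℕ))⁻¹ ≤ (Xᵀ * (Vmat D A)⁻¹ * X).det := by
        rw [mul_inv_le_iff₀' hcp]
        exact hdetle
      have hlbpos : 0 < (Xᵀ * X).det * ((A + Dmax) ^ (p : ℕ))⁻¹ := by positivity
      have h := Real.rpow_le_rpow_of_nonpos hlbpos hlb (by norm_num : -(1 : ℝ) / 2 ≤ 0)
      calc (Xᵀ * (Vmat D A)⁻¹ * X).det ^ (-(1 : ℝ) / 2)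
          ≤ ((Xᵀ * X).det * ((A + Dmax) ^ (p : ℕ))⁻¹) ^ (-(1 : ℝ) / 2) := h
        _ = (Xᵀ * X).det ^ (-(1 : ℝ) / 2) * (A + Dmax) ^ ((p : ℝ) / 2) := by
            rw [Real.mul_rpow hdX.le (by positivity),
              ← Real.rpow_natCast (A + Dmax) p, ← Real.rpow_neg hc.le,
              ← Real.rpow_mul hc.le]
            congr 2
            ring
    have hq : 0 ≤ y ⬝ᵥ (Pmat X D A *ᵥ y) := by
      have h := (aux_Pmat_posSemidef X D hXinj hd).dotProduct_mulVec_nonneg y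
      simpa using h
    have e3 : Real.exp (-(y ⬝ᵥ (Pmat X D A *ᵥ y)) / 2) ≤ 1 :=
      Real.exp_le_one_iff.mpr (by linarith)
    have hLREpos : 0 < LRE X D y A := by
      rw [LRE]
      exact mul_pos (mul_pos (Real.rpow_pos_of_pos hdS _) (Real.rpow_pos_of_pos hdetVpos _))
        (Real.exp_pos _)
    refine ⟨hLREpos, ?_⟩
    have hfin : LRE X D y A ≤
        (Xᵀ * X).det ^ (-(1 : ℝ) / 2) * (A + Dmax) ^ ((p : ℝ) / 2) *
          (A + Dmin) ^ (-(m : ℝ) / 2) := by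
      rw [LRE]
      have hnn1 : 0 ≤ (Xᵀ * (Vmat D A)⁻¹ * X).det ^ (-(1 : ℝ) / 2) * (Vmat D A).det ^ (-(1 : ℝ) / 2) :=
        mul_nonneg (Real.rpow_nonneg hdS.le _) (Real.rpow_nonneg hdetVpos.le _)
      calc (Xᵀ * (Vmat D A)⁻¹ * X).det ^ (-(1 : ℝ) / 2) * (Vmat D A).det ^ (-(1 : ℝ) / 2) *
            Real.exp (-(y ⬝ᵥ (Pmat X D A *ᵥ y)) / 2)
          ≤ (Xᵀ * (Vmat D A)⁻¹ * X).det ^ (-(1 : ℝ) / 2) * (Vmat D A).det ^ (-(1 : ℝ) / 2) * 1 :=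
            mul_le_mul_of_nonneg_left e3 hnn1
        _ = (Xᵀ * (Vmat D A)⁻¹ * X).det ^ (-(1 : ℝ) / 2) * (Vmat D A).det ^ (-(1 : ℝ) / 2) :=
            mul_one _
        _ ≤ ((Xᵀ * X).det ^ (-(1 : ℝ) / 2) * (A + Dmax) ^ ((p : ℝ) / 2)) *
              ((A + Dmin) ^ (-(m : ℝ) / 2)) :=
            mul_le_mul e1 e2 (Real.rpow_nonneg hdetVpos.le _)
              (by positivity)
        _ = (Xᵀ * X).det ^ (-(1 : ℝ) / 2) * (A + Dmax) ^ ((p : ℝ) / 2) *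
              (A + Dmin) ^ (-(m : ℝ) / 2) := by ring
    calc A ^ ((1 + z ^ 2) / 4) * LRE X D y A
        ≤ A ^ ((1 + z ^ 2) / 4) *
            ((Xᵀ * X).det ^ (-(1 : ℝ) / 2) * (A + Dmax) ^ ((p : ℝ) / 2) *
              (A + Dmin) ^ (-(m : ℝ) / 2)) :=
          mul_le_mul_of_nonneg_left hfin (Real.rpow_nonneg hA.le _)
      _ = (Xᵀ * X).det ^ (-(1 : ℝ) / 2) * A ^ ((1 + z ^ 2) / 4) *
            (A + Dmax) ^ ((p : ℝ) / 2) * (A + Dmin) ^ (-(m : ℝ) / 2) := by ring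
  -- part 3: big-O
  have part3 : (fun A : ℝ =>
        (Xᵀ * X).det ^ (-(1 : ℝ) / 2) * A ^ ((1 + z ^ 2) / 4) *
          (A + Dmax) ^ ((p : ℝ) / 2) * (A + Dmin) ^ (-(m : ℝ) / 2))
      =O[Filter.atTop]
        (fun A : ℝ => A ^ ((1 + z ^ 2) / 4 - ((m : ℝ) - (p : ℝ)) / 2)) := by
    rw [Asymptotics.isBigO_iff]
    refine ⟨(Xᵀ * X).det ^ (-(1 : ℝ) / 2) * (1 + Dmax) ^ ((p : ℝ) / 2), ?_⟩
    filter_upwards [Filter.eventually_ge_atTop (1 : ℝ)] with A hA1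
    have hA : (0 : ℝ) < A := lt_of_lt_of_le one_pos hA1
    have hc : 0 < A + Dmax := by linarith
    have hmn : 0 < A + Dmin := by linarith
    have h1 : (A + Dmax) ^ ((p : ℝ) / 2) ≤ (1 + Dmax) ^ ((p : ℝ) / 2) * A ^ ((p : ℝ) / 2) := by
      have hle : A + Dmax ≤ (1 + Dmax) * A := by nlinarith
      calc (A + Dmax) ^ ((p : ℝ) / 2) ≤ ((1 + Dmax) * A) ^ ((p : ℝ) / 2) :=
            Real.rpow_le_rpow hc.le hle (by positivity)
        _ = (1 + Dmax) ^ ((p : ℝ) / 2) * A ^ ((p : ℝ) / 2) :=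
            Real.mul_rpow (by linarith) hA.le
    have h2 : (A + Dmin) ^ (-(m : ℝ) / 2) ≤ A ^ (-(m : ℝ) / 2) :=
      Real.rpow_le_rpow_of_nonpos hA (by linarith)
        (by have : (0:ℝ) ≤ (m:ℝ) := Nat.cast_nonneg m; linarith)
    have hcomb : A ^ ((1 + z ^ 2) / 4) * A ^ ((p : ℝ) / 2) * A ^ (-(m : ℝ) / 2) =
        A ^ ((1 + z ^ 2) / 4 - ((m : ℝ) - (p : ℝ)) / 2) := by
      rw [← Real.rpow_add hA, ← Real.rpow_add hA]
      congr 1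
      ring
    have hnorm1 : ‖(Xᵀ * X).det ^ (-(1 : ℝ) / 2) * A ^ ((1 + z ^ 2) / 4) *
        (A + Dmax) ^ ((p : ℝ) / 2) * (A + Dmin) ^ (-(m : ℝ) / 2)‖ =
        (Xᵀ * X).det ^ (-(1 : ℝ) / 2) * A ^ ((1 + z ^ 2) / 4) *
        (A + Dmax) ^ ((p : ℝ) / 2) * (A + Dmin) ^ (-(m : ℝ) / 2) := by
      rw [Real.norm_eq_abs, abs_of_nonneg]
      have := Real.rpow_nonneg hdX.le (-(1 : ℝ) / 2)
      positivity
    have hnorm2 : ‖A ^ ((1 + z ^ 2) / 4 - ((m : ℝ) - (p : ℝ)) / 2)‖ =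
        A ^ ((1 + z ^ 2) / 4 - ((m : ℝ) - (p : ℝ)) / 2) := by
      rw [Real.norm_eq_abs, abs_of_nonneg (Real.rpow_nonneg hA.le _)]
    rw [hnorm1, hnorm2, ← hcomb]
    have hdXr : 0 ≤ (Xᵀ * X).det ^ (-(1 : ℝ) / 2) := Real.rpow_nonneg hdX.le _
    calc (Xᵀ * X).det ^ (-(1 : ℝ) / 2) * A ^ ((1 + z ^ 2) / 4) *
          (A + Dmax) ^ ((p : ℝ) / 2) * (A + Dmin) ^ (-(m : ℝ) / 2)
        ≤ (Xᵀ * X).det ^ (-(1 : ℝ) / 2) * A ^ ((1 + z ^ 2) / 4) *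
          ((1 + Dmax) ^ ((p : ℝ) / 2) * A ^ ((p : ℝ) / 2)) * A ^ (-(m : ℝ) / 2) := by
          have hb1 : 0 ≤ (Xᵀ * X).det ^ (-(1 : ℝ) / 2) * A ^ ((1 + z ^ 2) / 4) :=
            mul_nonneg hdXr (Real.rpow_nonneg hA.le _)
          apply mul_le_mul
          · exact mul_le_mul_of_nonneg_left h1 hb1
          · exact h2
          · positivity
          · positivity
      _ = (Xᵀ * X).det ^ (-(1 : ℝ) / 2) * (1 + Dmax) ^ ((p : ℝ) / 2) *
          (A ^ ((1 + z ^ 2) / 4) * A ^ ((p : ℝ) / 2) * A ^ (-(m : ℝ) / 2)) := by ring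
  -- part 1: tendsto
  have hexp_neg : (1 + z ^ 2) / 4 - ((m : ℝ) - (p : ℝ)) / 2 < 0 := by nlinarith [sq_nonneg z]
  have hg0 : Filter.Tendsto (fun A : ℝ => A ^ ((1 + z ^ 2) / 4 - ((m : ℝ) - (p : ℝ)) / 2))
      Filter.atTop (nhds 0) := by
    have h := tendsto_rpow_neg_atTop (y := -((1 + z ^ 2) / 4 - ((m : ℝ) - (p : ℝ)) / 2))
      (by linarith)
    simpa using h
  have hf0 : Filter.Tendsto (fun A : ℝ =>
      (Xᵀ * X).det ^ (-(1 : ℝ) / 2) * A ^ ((1 + z ^ 2) / 4) *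
        (A + Dmax) ^ ((p : ℝ) / 2) * (A + Dmin) ^ (-(m : ℝ) / 2))
      Filter.atTop (nhds 0) := part3.trans_tendsto hg0
  refine ⟨?_, fun A hA => (master A hA).2, part3⟩
  apply tendsto_of_tendsto_of_tendsto_of_le_of_le' tendsto_const_nhds hf0
  · filter_upwards [Filter.eventually_gt_atTop (0 : ℝ)] with A hA
    exact mul_nonneg (Real.rpow_nonneg hA.le _) (master A hA).1.le
  · filter_upwards [Filter.eventually_gt_atTop (0 : ℝ)] with A hA
    exact (master A hA).2
end

section
/- Boundary behavior of the NAS adjusted likelihood. Fix a real number z and y ∈ ℝ^m. The function f(A) = A^{(1+z²)/4} · L_RE(A) is continuous on [0,∞), satisfies f(0) = 0, and satisfies f(A) > 0 for every A > 0. -/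
open Matrix Real Filter

lemma matMulCO {s : Set ℝ} {a b c : ℕ} {f : ℝ → Matrix (Fin a) (Fin b) ℝ}
    {g : ℝ → Matrix (Fin b) (Fin c) ℝ}
    (hf : ContinuousOn f s) (hg : ContinuousOn g s) :
    ContinuousOn (fun x => f x * g x) s := by
  have h := (continuous_fst.matrix_mul continuous_snd).comp_continuousOn (hf.prodMk hg)
  exact h

lemma sandwichPD {m p : ℕ} {W : Matrix (Fin m) (Fin m) ℝ} (hW : W.PosDef)
    {X : Matrix (Fin m) (Fin p) ℝ} (hX : ∀ v, X *ᵥ v = 0 → v = 0) :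
    (Xᵀ * W * X).PosDef := by
  have hs : (Xᵀ * W * X).PosSemidef := by
    have h := hW.posSemidef.conjTranspose_mul_mul_same X
    rwa [conjTranspose_eq_transpose_of_trivial] at h
  refine PosDef.of_dotProduct_mulVec_pos hs.1 fun x hx => ?_
  have hXx : X *ᵥ x ≠ 0 := fun h => hx (hX x h)
  have := hW.dotProduct_mulVec_pos hXx
  simpa only [star_mulVec, dotProduct_mulVec, vecMul_vecMul,
    conjTranspose_eq_transpose_of_trivial] using this

lemma rank_inj {m p : ℕ} {X : Matrix (Fin m) (Fin p) ℝ} (hrank : X.rank = p) :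
    ∀ v : Fin p → ℝ, X *ᵥ v = 0 → v = 0 := by
  intro v hv
  have h2 := LinearMap.finrank_range_add_finrank_ker X.mulVecLin
  have h3 : Module.finrank ℝ (Fin p → ℝ) = p := by simp
  rw [h3] at h2
  rw [Matrix.rank] at hrank
  rw [hrank] at h2
  have hker : Module.finrank ℝ (LinearMap.ker X.mulVecLin) = 0 := by omega
  have hbot : LinearMap.ker X.mulVecLin = ⊥ := Submodule.finrank_eq_zero.mp hker
  exact Matrix.ker_mulVecLin_eq_bot_iff.mp hbot v hv

/-- Boundary behavior of the NAS adjusted likelihood: `f(A) = A^{(1+z²)/4}·L_RE(A)`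
is continuous on `[0,∞)`, `f(0) = 0`, and `f(A) > 0` for every `A > 0`. -/
theorem nas_adjusted_likelihood_boundary {m p : ℕ} (hm : 0 < m) (hp : 0 < p)
    (X : Matrix (Fin m) (Fin p) ℝ) (hrank : X.rank = p)
    (D : Fin m → ℝ) (hD : ∀ j, 0 < D j)
    (z : ℝ) (y : Fin m → ℝ) :
    ContinuousOn (fun A : ℝ => A ^ ((1 + z ^ 2) / 4) * LRE X D y A) (Set.Ici 0) ∧
    (0 : ℝ) ^ ((1 + z ^ 2) / 4) * LRE X D y 0 = 0 ∧
    ∀ A : ℝ, 0 < A → 0 < A ^ ((1 + z ^ 2) / 4) * LRE X D y A := by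
  set s := Set.Ici (0 : ℝ) with hs_def
  have hpos : ∀ A ∈ s, ∀ i, 0 < A + D i := fun A hA i =>
    add_pos_of_nonneg_of_pos hA (hD i)
  have hXinj := rank_inj hrank
  -- determinant of V
  have hVdet : ∀ A ∈ s, 0 < (Vmat D A).det := by
    intro A hA
    rw [Vmat, det_diagonal]
    exact Finset.prod_pos fun i _ => hpos A hA i
  -- explicit inverse of V
  have hVinv : ∀ A ∈ s, (Vmat D A)⁻¹ = diagonal (fun i => (A + D i)⁻¹) := by
    intro A hA
    apply inv_eq_right_inv
    rw [Vmat, diagonal_mul_diagonal]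
    have : (fun i => (A + D i) * (A + D i)⁻¹) = fun _ => (1 : ℝ) :=
      funext fun i => mul_inv_cancel₀ (hpos A hA i).ne'
    rw [this, diagonal_one]
  have hVinvPD : ∀ A ∈ s, ((Vmat D A)⁻¹).PosDef := by
    intro A hA
    rw [hVinv A hA]
    exact .diagonal fun i => inv_pos.2 (hpos A hA i)
  have hMPD : ∀ A ∈ s, (Xᵀ * (Vmat D A)⁻¹ * X).PosDef := fun A hA =>
    sandwichPD (hVinvPD A hA) hXinj
  have hMdet : ∀ A ∈ s, 0 < (Xᵀ * (Vmat D A)⁻¹ * X).det := fun A hA =>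
    (hMPD A hA).det_pos
  -- continuity pieces
  have hgc : ContinuousOn (fun A : ℝ => fun i => (A + D i)⁻¹) s :=
    continuousOn_pi.2 fun i =>
      (continuousOn_id.add continuousOn_const).inv₀ fun A hA => (hpos A hA i).ne'
  have hVinvCont : ContinuousOn (fun A => (Vmat D A)⁻¹) s :=
    ((continuous_id.matrix_diagonal).comp_continuousOn hgc).congr fun A hA => hVinv A hA
  have hVCont : Continuous fun A : ℝ => Vmat D A :=
    (continuous_pi fun i => continuous_id.add continuous_const).matrix_diagonal
  have hVdetCont : ContinuousOn (fun A => (Vmat D A).det) s :=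
    (continuous_id.matrix_det).comp_continuousOn hVCont.continuousOn
  have hMCont : ContinuousOn (fun A => Xᵀ * (Vmat D A)⁻¹ * X) s :=
    matMulCO (matMulCO continuousOn_const hVinvCont) continuousOn_const
  have hMdetCont : ContinuousOn (fun A => (Xᵀ * (Vmat D A)⁻¹ * X).det) s :=
    (continuous_id.matrix_det).comp_continuousOn hMCont
  have hMinvCont : ContinuousOn (fun A => (Xᵀ * (Vmat D A)⁻¹ * X)⁻¹) s := by
    have h1 : ContinuousOn
        (fun A => ((Xᵀ * (Vmat D A)⁻¹ * X).det)⁻¹ • (Xᵀ * (Vmat D A)⁻¹ * X).adjugate) s :=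
      (hMdetCont.inv₀ fun A hA => (hMdet A hA).ne').smul
        ((continuous_id.matrix_adjugate).comp_continuousOn hMCont)
    exact h1.congr fun A hA => by rw [Matrix.inv_def, Ring.inverse_eq_inv]
  have hPCont : ContinuousOn (fun A => Pmat X D A) s := by
    unfold Pmat
    exact hVinvCont.sub
      (matMulCO (matMulCO (matMulCO (matMulCO hVinvCont continuousOn_const) hMinvCont)
        continuousOn_const) hVinvCont)
  have hqCont : ContinuousOn (fun A => y ⬝ᵥ (Pmat X D A *ᵥ y)) s :=
    (continuous_const.dotProduct
      (continuous_id.matrix_mulVec continuous_const)).comp_continuousOn hPCont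
  have hLCont : ContinuousOn (fun A => LRE X D y A) s := by
    unfold LRE
    exact ((hMdetCont.rpow_const fun A hA => Or.inl (hMdet A hA).ne').mul
      (hVdetCont.rpow_const fun A hA => Or.inl (hVdet A hA).ne')).mul
      (Real.continuous_exp.comp_continuousOn (hqCont.neg.div_const 2))
  have hexp : (0 : ℝ) < (1 + z ^ 2) / 4 := by positivity
  refine ⟨?_, ?_, ?_⟩
  · exact (continuousOn_id.rpow_const fun A hA => Or.inr hexp.le).mul hLCont
  · rw [Real.zero_rpow hexp.ne', zero_mul]
  · intro A hA
    have hAs : A ∈ s := le_of_lt hA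
    have hL : 0 < LRE X D y A := by
      rw [LRE]
      exact mul_pos (mul_pos (Real.rpow_pos_of_pos (hMdet A hAs) _)
        (Real.rpow_pos_of_pos (hVdet A hAs) _)) (Real.exp_pos _)
    exact mul_pos (Real.rpow_pos_of_pos hA _) hL
end
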